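/- arXiv:1803.04441 — 7 statements merged into one kernel-verified Lean document; each statement's English description precedes it below -/
import Mathlib

section
/- (𝒥(R), ∘) is a loop with unit element t: t ∘ f = f = f ∘ t for all f ∈ 𝒥(R); for all f, h ∈ 𝒥(R) there is a unique g ∈ 𝒥(R) with f ∘ g = h; and for all g, h ∈ 𝒥(R) there is a unique f ∈ 𝒥(R) with f ∘ g = h. -/
open PowerSeries

/-- The set `𝒥(R)` of formal power series `t + ∑_{i≥1} α_i t^{i+1}`:
zero constant term and coefficient of `t` equal to `1`. -/
def Jset (R : Type*) [Ring R] : Set (PowerSeries R) :=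
  {f | coeff 0 f = 0 ∧ coeff 1 f = 1}

/-- The substitution product `f ∘ g = ∑_{m ≥ 0} α_m g^{m+1}`, where `α_m` is the
coefficient of `t^{m+1}` in `f`, defined coefficientwise (for `g` with zero constant
term, `g^{m+1}` has order at least `m+1`, so only `m < k` contributes in degree `k`). -/
noncomputable def Jcomp {R : Type*} [Ring R] (f g : PowerSeries R) : PowerSeries R :=
  PowerSeries.mk fun k => ∑ m ∈ Finset.range k, coeff (m + 1) f * coeff k (g ^ (m + 1))

section Aux

variable {R : Type*} [Ring R]

/-- If `g` has zero constant coefficient, `g^n` has order at least `n`. -/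
lemma aux_pow_vanish (g : PowerSeries R) (h0 : coeff 0 g = 0) :
    ∀ n k : ℕ, k < n → coeff k (g ^ n) = 0 := by
  intro n
  induction n with
  | zero => intro k hk; omega
  | succ n ih =>
    intro k hk
    rw [pow_succ', coeff_mul]
    refine Finset.sum_eq_zero fun p hp => ?_
    rw [Finset.HasAntidiagonal.mem_antidiagonal] at hp
    rcases Nat.eq_zero_or_pos p.1 with h1 | h1
    · have : p.1 = 0 := h1
      rw [this, h0, zero_mul]
    · have : p.2 < n := by omega
      rw [ih p.2 this, mul_zero]

/-- `coeff k (g^n)` only depends on the coefficients of `g` in degrees `≤ j`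
when `k ≤ j + n - 1` (stated as `k + 1 ≤ j + n`). -/
lemma aux_pow_agree (g g' : PowerSeries R) (h0 : coeff 0 g = 0) (h0' : coeff 0 g' = 0)
    (j : ℕ) (hagree : ∀ i ≤ j, coeff i g = coeff i g') :
    ∀ n k : ℕ, k + 1 ≤ j + n → coeff k (g ^ n) = coeff k (g' ^ n) := by
  intro n
  induction n with
  | zero => intro k hk; rfl
  | succ n ih =>
    intro k hk
    rw [pow_succ', pow_succ', coeff_mul, coeff_mul]
    refine Finset.sum_congr rfl fun p hp => ?_
    rw [Finset.HasAntidiagonal.mem_antidiagonal] at hp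
    rcases Nat.eq_zero_or_pos p.1 with h1 | h1
    · rw [h1, h0, h0', zero_mul, zero_mul]
    · rcases lt_or_ge p.2 n with h2 | h2
      · rw [aux_pow_vanish g h0 n p.2 h2, aux_pow_vanish g' h0' n p.2 h2, mul_zero, mul_zero]
      · have hp1 : p.1 ≤ j := by omega
        have hp2 : p.2 + 1 ≤ j + n := by omega
        rw [hagree p.1 hp1, ih p.2 hp2]

/-- `coeff n (g^n) = (coeff 1 g)^n` when `g` has zero constant coefficient. -/
lemma aux_pow_diag (g : PowerSeries R) (h0 : coeff 0 g = 0) :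
    ∀ n : ℕ, coeff n (g ^ n) = (coeff 1 g) ^ n := by
  intro n
  induction n with
  | zero => simp
  | succ n ih =>
    rw [pow_succ', coeff_mul]
    rw [Finset.sum_eq_single (1, n)]
    · rw [ih, pow_succ']
    · intro p hp hne
      rw [Finset.HasAntidiagonal.mem_antidiagonal] at hp
      rcases Nat.eq_zero_or_pos p.1 with h1 | h1
      · rw [show p.1 = 0 from h1, h0, zero_mul]
      · have : p.2 < n := by
          rcases Nat.lt_or_ge p.2 n with h | h
          · exact h
          · exfalso; apply hne
            have : p.1 = 1 := by omega
            have : p.2 = n := by omega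
            ext <;> omega
        rw [aux_pow_vanish g h0 n p.2 this, mul_zero]
    · intro h
      exfalso; apply h
      rw [Finset.HasAntidiagonal.mem_antidiagonal]
      omega

/-- General fixed-point construction: if `coeff k (F g)` only depends on the
coefficients of `g` in degrees `< k`, then `F` has a unique fixed point. -/

noncomputable def fixSeq (F : PowerSeries R → PowerSeries R) (k : ℕ) : R :=
  coeff k (F (PowerSeries.mk fun i => if h : i < k then fixSeq F i else 0))
termination_by k
decreasing_by exact h

lemma existsUnique_fixed (F : PowerSeries R → PowerSeries R)
    (H : ∀ g g' : PowerSeries R, ∀ k : ℕ,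
      (∀ i < k, coeff i g = coeff i g') → coeff k (F g) = coeff k (F g')) :
    ∃! g : PowerSeries R, F g = g := by
  have key : ∀ k, coeff k (F (PowerSeries.mk (fixSeq F))) = fixSeq F k := by
    intro k
    rw [fixSeq]
    exact (H _ _ k (fun i hi => by simp [hi])).symm
  refine ⟨PowerSeries.mk (fixSeq F), ?_, ?_⟩
  · ext k; rw [key k, coeff_mk]
  · intro g hg
    ext k
    induction k using Nat.strong_induction_on with
    | _ k ih =>
      rw [coeff_mk, ← key k, ← hg]
      exact H g _ k fun i hi => by rw [ih i hi, coeff_mk]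

lemma coeff_Jcomp (f g : PowerSeries R) (k : ℕ) :
    coeff k (Jcomp f g) =
      ∑ m ∈ Finset.range k, coeff (m + 1) f * coeff k (g ^ (m + 1)) := by
  simp [Jcomp]

lemma sum_range_split (a : ℕ → R) (k : ℕ) (hk : 0 < k) :
    ∑ m ∈ Finset.range k, a m = a 0 + ∑ m ∈ Finset.Ioo 0 k, a m := by
  rw [← Finset.Ico_erase_left, ← Finset.range_eq_Ico,
    Finset.add_sum_erase _ a (Finset.mem_range.mpr hk)]

/-- Right division: unique `g` with `f ∘ g = h`. -/
lemma right_div (f h : PowerSeries R) (hf : f ∈ Jset R) (hh : h ∈ Jset R) :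
    ∃! g, g ∈ Jset R ∧ Jcomp f g = h := by
  obtain ⟨hf0, hf1⟩ := hf
  obtain ⟨hh0, hh1⟩ := hh
  set F : PowerSeries R → PowerSeries R := fun g =>
    PowerSeries.mk fun k => coeff k h - ∑ m ∈ Finset.Ioo 0 k,
      coeff (m + 1) f * coeff k ((g - PowerSeries.C (coeff 0 g)) ^ (m + 1)) with hF
  have hFcoeff : ∀ g k, coeff k (F g) = coeff k h - ∑ m ∈ Finset.Ioo 0 k,
      coeff (m + 1) f * coeff k ((g - PowerSeries.C (coeff 0 g)) ^ (m + 1)) := by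
    intro g k; rw [hF]; simp
  have hsub0 : ∀ g : PowerSeries R, coeff 0 (g - PowerSeries.C (coeff 0 g)) = 0 := by
    intro g; simp [coeff_C]
  have H : ∀ g g' : PowerSeries R, ∀ k : ℕ,
      (∀ i < k, coeff i g = coeff i g') → coeff k (F g) = coeff k (F g') := by
    intro g g' k hlt
    rw [hFcoeff, hFcoeff]
    congr 1
    refine Finset.sum_congr rfl fun m hm => ?_
    rw [Finset.mem_Ioo] at hm
    congr 1
    refine aux_pow_agree _ _ (hsub0 g) (hsub0 g') (k - 1) ?_ (m + 1) k (by omega)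
    intro i hi
    have h0 : coeff 0 g = coeff 0 g' := hlt 0 (by omega)
    rcases Nat.eq_zero_or_pos i with hi0 | hi0
    · subst hi0; rw [hsub0, hsub0]
    · simp only [map_sub, coeff_C, if_neg (by omega : ¬ i = 0), sub_zero]
      rw [hlt i (by omega)]
  obtain ⟨g₀, hg₀, huniq⟩ := existsUnique_fixed F H
  have equiv : ∀ g : PowerSeries R, (g ∈ Jset R ∧ Jcomp f g = h) ↔ F g = g := by
    intro g
    constructor
    · rintro ⟨⟨hg0, hg1⟩, hcomp⟩
      have hg : g - PowerSeries.C (coeff 0 g) = g := by rw [hg0, map_zero, sub_zero]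
      ext k
      rw [hFcoeff, hg, ← hcomp, coeff_Jcomp]
      rcases Nat.eq_zero_or_pos k with hk | hk
      · subst hk; simp [hg0]
      · rw [sum_range_split _ k hk, hf1, pow_one, one_mul]
        abel
    · intro hfix
      have hg0 : coeff 0 g = 0 := by
        conv_lhs => rw [← hfix]
        rw [hFcoeff]; simp [hh0]
      have hg1 : coeff 1 g = 1 := by
        conv_lhs => rw [← hfix]
        rw [hFcoeff]; simp [hh1, (by decide : Finset.Ioo (0:ℕ) 1 = ∅)]
      have hg : g - PowerSeries.C (coeff 0 g) = g := by rw [hg0, map_zero, sub_zero]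
      refine ⟨⟨hg0, hg1⟩, ?_⟩
      ext k
      rw [coeff_Jcomp]
      rcases Nat.eq_zero_or_pos k with hk | hk
      · subst hk; simp [hh0]
      · rw [sum_range_split _ k hk, hf1, pow_one, one_mul]
        have : coeff k g = coeff k (F g) := by rw [hfix]
        rw [hFcoeff, hg] at this
        rw [this]; abel
  exact ⟨g₀, (equiv g₀).mpr hg₀, fun y hy => huniq y ((equiv y).mp hy)⟩

/-- Left division: unique `f` with `f ∘ g = h`. -/
lemma left_div (g h : PowerSeries R) (hg : g ∈ Jset R) (hh : h ∈ Jset R) :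
    ∃! f, f ∈ Jset R ∧ Jcomp f g = h := by
  obtain ⟨hg0, hg1⟩ := hg
  obtain ⟨hh0, hh1⟩ := hh
  have hdiag : ∀ n : ℕ, coeff n (g ^ n) = 1 := by
    intro n; rw [aux_pow_diag g hg0, hg1, one_pow]
  set F : PowerSeries R → PowerSeries R := fun f =>
    PowerSeries.mk fun k => coeff k h - ∑ m ∈ Finset.range (k - 1),
      coeff (m + 1) f * coeff k (g ^ (m + 1)) with hF
  have hFcoeff : ∀ f k, coeff k (F f) = coeff k h - ∑ m ∈ Finset.range (k - 1),
      coeff (m + 1) f * coeff k (g ^ (m + 1)) := by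
    intro f k; rw [hF]; simp
  have H : ∀ f f' : PowerSeries R, ∀ k : ℕ,
      (∀ i < k, coeff i f = coeff i f') → coeff k (F f) = coeff k (F f') := by
    intro f f' k hlt
    rw [hFcoeff, hFcoeff]
    congr 1
    refine Finset.sum_congr rfl fun m hm => ?_
    rw [Finset.mem_range] at hm
    rw [hlt (m + 1) (by omega)]
  obtain ⟨f₀, hf₀, huniq⟩ := existsUnique_fixed F H
  have equiv : ∀ f : PowerSeries R, (f ∈ Jset R ∧ Jcomp f g = h) ↔ F f = f := by
    intro f
    constructor
    · rintro ⟨⟨hf0, hf1⟩, hcomp⟩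
      ext k
      rw [hFcoeff, ← hcomp, coeff_Jcomp]
      rcases Nat.eq_zero_or_pos k with hk | hk
      · subst hk; simp [hf0]
      · obtain ⟨k', rfl⟩ : ∃ k', k = k' + 1 := ⟨k - 1, by omega⟩
        rw [Finset.sum_range_succ, hdiag, mul_one]
        simp only [Nat.add_sub_cancel]
        abel
    · intro hfix
      have hf0 : coeff 0 f = 0 := by
        conv_lhs => rw [← hfix]
        rw [hFcoeff]; simp [hh0]
      have hf1 : coeff 1 f = 1 := by
        conv_lhs => rw [← hfix]
        rw [hFcoeff]; simp [hh1]
      refine ⟨⟨hf0, hf1⟩, ?_⟩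
      ext k
      rw [coeff_Jcomp]
      rcases Nat.eq_zero_or_pos k with hk | hk
      · subst hk; simp [hh0]
      · obtain ⟨k', rfl⟩ : ∃ k', k = k' + 1 := ⟨k - 1, by omega⟩
        rw [Finset.sum_range_succ, hdiag, mul_one]
        have : coeff (k' + 1) f = coeff (k' + 1) (F f) := by rw [hfix]
        rw [hFcoeff] at this
        simp only [Nat.add_sub_cancel] at this
        rw [this]; abel
  exact ⟨f₀, (equiv f₀).mpr hf₀, fun y hy => huniq y ((equiv y).mp hy)⟩

end Aux

/-- `(𝒥(R), ∘)` is a loop with unit element `t`. -/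
theorem statement0 (R : Type*) [Ring R] :
    (∀ f ∈ Jset R, Jcomp (X : PowerSeries R) f = f ∧ Jcomp f (X : PowerSeries R) = f) ∧
    (∀ f ∈ Jset R, ∀ g ∈ Jset R, Jcomp f g ∈ Jset R) ∧
    (∀ f ∈ Jset R, ∀ h ∈ Jset R, ∃! g, g ∈ Jset R ∧ Jcomp f g = h) ∧
    (∀ g ∈ Jset R, ∀ h ∈ Jset R, ∃! f, f ∈ Jset R ∧ Jcomp f g = h) := by
  refine ⟨?_, ?_, fun f hf h hh => right_div f h hf hh, fun g hg h hh => left_div g h hg hh⟩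
  · rintro f ⟨hf0, hf1⟩
    constructor
    · ext k
      rw [coeff_Jcomp]
      rcases Nat.eq_zero_or_pos k with hk | hk
      · subst hk; simpa using hf0.symm
      · rw [Finset.sum_eq_single 0]
        · rw [coeff_one_X, one_mul, pow_one]
        · intro m hm hne
          rw [coeff_X, if_neg (by omega), zero_mul]
        · intro hmem; exact absurd (Finset.mem_range.mpr hk) hmem
    · ext k
      rw [coeff_Jcomp]
      rcases Nat.eq_zero_or_pos k with hk | hk
      · subst hk; simpa using hf0.symm
      · rw [Finset.sum_eq_single (k - 1)]
        · have hk1 : k - 1 + 1 = k := by omega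
          rw [coeff_X_pow, if_pos hk1.symm, mul_one, hk1]
        · intro m hm hne
          rw [Finset.mem_range] at hm
          rw [coeff_X_pow, if_neg (by omega), mul_zero]
        · intro hmem; exact absurd (Finset.mem_range.mpr (by omega)) hmem
  · rintro f ⟨hf0, hf1⟩ g ⟨hg0, hg1⟩
    constructor
    · rw [coeff_Jcomp]; simp
    · rw [coeff_Jcomp]; simp [hf1, hg1]
end

section
/- (𝒥(R), ⋆) is a loop with unit element t: t ⋆ f = f = f ⋆ t for all f ∈ 𝒥(R); for all f, h ∈ 𝒥(R) there is a unique g ∈ 𝒥(R) with f ⋆ g = h; and for all g, h ∈ 𝒥(R) there is a unique f ∈ 𝒥(R) with f ⋆ g = h. -/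
open PowerSeries

/-- The formal derivative `d/dt` on `R[[t]]` (coefficientwise). -/
noncomputable def Dser {R : Type*} [Ring R] (f : PowerSeries R) : PowerSeries R :=
  PowerSeries.mk fun n => (n + 1 : ℕ) • coeff (n + 1) f

/-- The product `f ⋆ g := t + (f − t) + (g − t) + (f − t)′·(g − t)`. -/
noncomputable def Jstar {R : Type*} [Ring R] (f g : PowerSeries R) : PowerSeries R :=
  X + (f - X) + (g - X) + Dser (f - X) * (g - X)

section Aux

variable {R : Type*} [Ring R]

lemma coeff_Dser (f : PowerSeries R) (n : ℕ) :
    coeff n (Dser f) = (n+1) • coeff (n+1) f := by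
  simp [Dser]

lemma coeff_Dser_mul (u v : PowerSeries R) (k : ℕ) :
    coeff k (Dser u * v) =
      ∑ i ∈ Finset.range (k+1), (i+1) • coeff (i+1) u * coeff (k-i) v := by
  rw [coeff_mul, Finset.Nat.sum_antidiagonal_eq_sum_range_succ_mk]
  simp [coeff_Dser]

lemma mem_Jset_iff (f : PowerSeries R) :
    f ∈ Jset R ↔ coeff 0 (f - X) = 0 ∧ coeff 1 (f - X) = 0 := by
  unfold Jset
  simp [Set.mem_setOf_eq, map_sub, coeff_X, sub_eq_zero]

lemma Jstar_eq_iff (f g h : PowerSeries R) :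
    Jstar f g = h ↔ ∀ k, coeff k (f-X) + coeff k (g-X) +
      ∑ i ∈ Finset.range (k+1), (i+1) • coeff (i+1) (f-X) * coeff (k-i) (g-X)
        = coeff k (h-X) := by
  have h1 : Jstar f g = ((f-X) + (g-X) + Dser (f-X) * (g-X)) + X := by
    rw [Jstar]; abel
  rw [h1, ← eq_sub_iff_add_eq, PowerSeries.ext_iff]
  apply forall_congr'
  intro k
  simp only [map_add, coeff_Dser_mul]

noncomputable def solV (α w : ℕ → R) : ℕ → R
  | k => w k - α k - ∑ i ∈ (Finset.Ico 1 (k+1)).attach,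
      (i.1+1) • α (i.1+1) * solV α w (k - i.1)
  termination_by k => k
  decreasing_by have h := Finset.mem_Ico.mp i.2; omega

lemma solV_eq (α w : ℕ → R) (k : ℕ) :
    solV α w k = w k - α k - ∑ i ∈ (Finset.Ico 1 (k+1)).attach,
      (i.1+1) • α (i.1+1) * solV α w (k - i.1) := by
  rw [solV.eq_def]

noncomputable def solU (β w : ℕ → R) : ℕ → R
  | k => w k - β k - ∑ i ∈ (Finset.range (k-1)).attach,
      (i.1+1) • solU β w (i.1+1) * β (k - i.1)
  termination_by k => k
  decreasing_by have h := Finset.mem_range.mp i.2; omega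

lemma solU_eq (β w : ℕ → R) (k : ℕ) :
    solU β w k = w k - β k - ∑ i ∈ (Finset.range (k-1)).attach,
      (i.1+1) • solU β w (i.1+1) * β (k - i.1) := by
  rw [solU.eq_def]

lemma sumL (α : ℕ → R) (hα1 : α 1 = 0) (p : ℕ → R) (k : ℕ) :
    ∑ i ∈ Finset.range (k+1), (i+1) • α (i+1) * p (k-i)
      = ∑ i ∈ (Finset.Ico 1 (k+1)).attach, (i.1+1) • α (i.1+1) * p (k - i.1) := by
  rw [Finset.sum_attach (Finset.Ico 1 (k+1)) (fun i => (i+1) • α (i+1) * p (k-i))]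
  symm
  apply Finset.sum_subset
  · intro x hx
    simp only [Finset.mem_Ico, Finset.mem_range] at *
    omega
  · intro x hx hx'
    have hx0 : x = 0 := by
      simp only [Finset.mem_Ico, Finset.mem_range] at *
      omega
    subst hx0
    simp [hα1]

lemma sumR (β : ℕ → R) (hβ0 : β 0 = 0) (hβ1 : β 1 = 0) (q : ℕ → R) (k : ℕ) :
    ∑ i ∈ Finset.range (k+1), (i+1) • q (i+1) * β (k-i)
      = ∑ i ∈ (Finset.range (k-1)).attach, (i.1+1) • q (i.1+1) * β (k - i.1) := by
  rw [Finset.sum_attach (Finset.range (k-1)) (fun i => (i+1) • q (i+1) * β (k-i))]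
  symm
  apply Finset.sum_subset
  · intro x hx
    simp only [Finset.mem_range] at *
    omega
  · intro x hx hx'
    have hk : k - x = 0 ∨ k - x = 1 := by
      simp only [Finset.mem_range] at *
      omega
    rcases hk with h' | h' <;> rw [h'] <;> simp [hβ0, hβ1]

lemma solV_spec (α w : ℕ → R) (hα1 : α 1 = 0) (k : ℕ) :
    α k + solV α w k + ∑ i ∈ Finset.range (k+1), (i+1) • α (i+1) * solV α w (k-i) = w k := by
  rw [sumL α hα1, solV_eq]
  abel

lemma solV_mem (α w : ℕ → R) (hα0 : α 0 = 0) (hα1 : α 1 = 0)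
    (hw0 : w 0 = 0) (hw1 : w 1 = 0) :
    solV α w 0 = 0 ∧ solV α w 1 = 0 := by
  have h0 : solV α w 0 = 0 := by
    rw [solV_eq]
    rw [show Finset.Ico 1 1 = ∅ from rfl]
    simp [hα0, hw0]
  refine ⟨h0, ?_⟩
  rw [solV_eq]
  rw [Finset.sum_attach (Finset.Ico 1 2) (fun i => (i+1) • α (i+1) * solV α w (1-i))]
  have : Finset.Ico 1 2 = {1} := rfl
  rw [this, Finset.sum_singleton]
  simp [hw1, hα1, h0]

lemma solV_unique (α w : ℕ → R) (hα1 : α 1 = 0) (β : ℕ → R)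
    (hβ : ∀ k, α k + β k + ∑ i ∈ Finset.range (k+1), (i+1) • α (i+1) * β (k-i) = w k) :
    ∀ k, β k = solV α w k := by
  intro k
  induction k using Nat.strong_induction_on with
  | _ k ih =>
    have e := hβ k
    rw [sumL α hα1 β k] at e
    have hs : ∑ i ∈ (Finset.Ico 1 (k+1)).attach, (i.1+1) • α (i.1+1) * β (k - i.1)
         = ∑ i ∈ (Finset.Ico 1 (k+1)).attach, (i.1+1) • α (i.1+1) * solV α w (k - i.1) := by
      apply Finset.sum_congr rfl
      intro i _
      rw [ih (k - i.1) (by have := Finset.mem_Ico.mp i.2; omega)]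
    rw [hs] at e
    rw [solV_eq, ← e]
    abel

lemma solU_spec (β w : ℕ → R) (hβ0 : β 0 = 0) (hβ1 : β 1 = 0) (k : ℕ) :
    solU β w k + β k + ∑ i ∈ Finset.range (k+1), (i+1) • solU β w (i+1) * β (k-i) = w k := by
  rw [sumR β hβ0 hβ1, solU_eq]
  abel

lemma solU_mem (β w : ℕ → R) (hβ0 : β 0 = 0) (hβ1 : β 1 = 0)
    (hw0 : w 0 = 0) (hw1 : w 1 = 0) :
    solU β w 0 = 0 ∧ solU β w 1 = 0 := by
  constructor <;> rw [solU_eq] <;>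
    simp [hβ0, hβ1, hw0, hw1, show (0:ℕ)-1 = 0 from rfl, show (1:ℕ)-1 = 0 from rfl]

lemma solU_unique (β w : ℕ → R) (hβ0 : β 0 = 0) (hβ1 : β 1 = 0) (a : ℕ → R)
    (ha : ∀ k, a k + β k + ∑ i ∈ Finset.range (k+1), (i+1) • a (i+1) * β (k-i) = w k) :
    ∀ k, a k = solU β w k := by
  intro k
  induction k using Nat.strong_induction_on with
  | _ k ih =>
    have e := ha k
    rw [sumR β hβ0 hβ1 a k] at e
    have hs : ∑ i ∈ (Finset.range (k-1)).attach, (i.1+1) • a (i.1+1) * β (k - i.1)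
         = ∑ i ∈ (Finset.range (k-1)).attach, (i.1+1) • solU β w (i.1+1) * β (k - i.1) := by
      apply Finset.sum_congr rfl
      intro i _
      rw [ih (i.1+1) (by have := Finset.mem_range.mp i.2; omega)]
    rw [hs] at e
    rw [solU_eq, ← e]
    abel

end Aux

/-- `(𝒥(R), ⋆)` is a loop with unit element `t`. -/
theorem statement2 (R : Type*) [Ring R] :
    (∀ f ∈ Jset R, Jstar (X : PowerSeries R) f = f ∧ Jstar f (X : PowerSeries R) = f) ∧
    (∀ f ∈ Jset R, ∀ g ∈ Jset R, Jstar f g ∈ Jset R) ∧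
    (∀ f ∈ Jset R, ∀ h ∈ Jset R, ∃! g, g ∈ Jset R ∧ Jstar f g = h) ∧
    (∀ g ∈ Jset R, ∀ h ∈ Jset R, ∃! f, f ∈ Jset R ∧ Jstar f g = h) := by
  have hD0 : Dser (0 : PowerSeries R) = 0 := by
    ext n; simp [Dser]
  refine ⟨?_, ?_, ?_, ?_⟩
  · -- unit laws
    intro f _
    constructor
    · rw [Jstar, sub_self, hD0, zero_mul]; abel
    · rw [Jstar, sub_self, mul_zero]; abel
  · -- closure
    intro f hf g hg
    obtain ⟨hu0, hu1⟩ := (mem_Jset_iff f).mp hf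
    obtain ⟨hv0, hv1⟩ := (mem_Jset_iff g).mp hg
    have e0 : coeff 0 (Jstar f g) = 0 := by
      rw [Jstar]
      simp only [map_add, coeff_Dser_mul]
      rw [Finset.sum_range_one]
      simp [coeff_X, hu0, hv0, hu1]
    have e1 : coeff 1 (Jstar f g) = 1 := by
      rw [Jstar]
      simp only [map_add, coeff_Dser_mul]
      rw [Finset.sum_range_succ, Finset.sum_range_one]
      simp [coeff_X, hu1, hv1, hv0]
    exact ⟨e0, e1⟩
  · -- left division
    intro f hf h hh
    obtain ⟨hα0, hα1⟩ := (mem_Jset_iff f).mp hf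
    obtain ⟨hw0, hw1⟩ := (mem_Jset_iff h).mp hh
    set α : ℕ → R := fun k => coeff k (f - X) with hα
    set w : ℕ → R := fun k => coeff k (h - X) with hw
    have hm := solV_mem α w hα0 hα1 hw0 hw1
    refine ⟨X + PowerSeries.mk (solV α w), ⟨?_, ?_⟩, ?_⟩
    · refine (mem_Jset_iff _).mpr ⟨?_, ?_⟩ <;>
        rw [add_sub_cancel_left] <;> simp [coeff_mk, hm.1, hm.2]
    · rw [Jstar_eq_iff]
      intro k
      rw [add_sub_cancel_left]
      simp only [coeff_mk]
      exact solV_spec α w hα1 k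
    · rintro g' ⟨_, hstar⟩
      have hβ' := (Jstar_eq_iff f g' h).mp hstar
      have huniq : ∀ k, coeff k (g' - X) = solV α w k :=
        solV_unique α w hα1 _ hβ'
      have : g' - X = PowerSeries.mk (solV α w) := by
        ext k
        rw [coeff_mk]
        exact huniq k
      exact sub_eq_iff_eq_add'.mp this
  · -- right division
    intro g hg h hh
    obtain ⟨hβ0, hβ1⟩ := (mem_Jset_iff g).mp hg
    obtain ⟨hw0, hw1⟩ := (mem_Jset_iff h).mp hh
    set β : ℕ → R := fun k => coeff k (g - X) with hβ
    set w : ℕ → R := fun k => coeff k (h - X) with hw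
    have hm := solU_mem β w hβ0 hβ1 hw0 hw1
    refine ⟨X + PowerSeries.mk (solU β w), ⟨?_, ?_⟩, ?_⟩
    · refine (mem_Jset_iff _).mpr ⟨?_, ?_⟩ <;>
        rw [add_sub_cancel_left] <;> simp [coeff_mk, hm.1, hm.2]
    · rw [Jstar_eq_iff]
      intro k
      rw [add_sub_cancel_left]
      simp only [coeff_mk]
      exact solU_spec β w hβ0 hβ1 k
    · rintro f' ⟨_, hstar⟩
      have ha' := (Jstar_eq_iff f' g h).mp hstar
      have huniq : ∀ k, coeff k (f' - X) = solU β w k :=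
        solU_unique β w hβ0 hβ1 _ ha'
      have : f' - X = PowerSeries.mk (solU β w) := by
        ext k
        rw [coeff_mk]
        exact huniq k
      exact sub_eq_iff_eq_add'.mp this
end

section
/- Then 0 • b = b for all b ∈ V, the map (a,b) ↦ a*b := (D L_a)(0)(b) − b is ℝ-bilinear, and for every a ∈ V the Fréchet derivative at 0 of the map b ↦ a + b + a*b equals (D L_a)(0). -/
/-- Let `V` be a finite-dimensional real normed vector space and `•` (here `mu`) a binary
operation on `V` such that `a ↦ mu a b − b` is `ℝ`-linear for each `b`, and each left
translation `L_a = mu a` is Fréchet differentiable at `0`.  Then `mu 0 b = b` for all `b`,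
the map `(a,b) ↦ a*b := (D L_a)(0)(b) − b` is `ℝ`-bilinear, and for every `a` the Fréchet
derivative at `0` of `b ↦ a + b + a*b` equals `(D L_a)(0)`. -/
theorem statement4 (V : Type*) [NormedAddCommGroup V] [NormedSpace ℝ V]
    [FiniteDimensional ℝ V] (mu : V → V → V)
    (hlin : ∀ b : V, IsLinearMap ℝ (fun a : V => mu a b - b))
    (hdiff : ∀ a : V, DifferentiableAt ℝ (mu a) 0) :
    (∀ b : V, mu 0 b = b) ∧
    (∀ a : V, IsLinearMap ℝ (fun b : V => fderiv ℝ (mu a) 0 b - b)) ∧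
    (∀ b : V, IsLinearMap ℝ (fun a : V => fderiv ℝ (mu a) 0 b - b)) ∧
    (∀ a : V, fderiv ℝ (fun b : V => a + b + (fderiv ℝ (mu a) 0 b - b)) 0
        = fderiv ℝ (mu a) 0) := by
  have hdsub : ∀ a : V, DifferentiableAt ℝ (fun b : V => mu a b - b) 0 :=
    fun a => (hdiff a).sub differentiableAt_id
  have key : ∀ a b : V, fderiv ℝ (mu a) 0 b - b
      = fderiv ℝ (fun b : V => mu a b - b) 0 b := by
    intro a b
    rw [fderiv_fun_sub (hdiff a) differentiableAt_fun_id, fderiv_id']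
    simp
  refine ⟨?_, ?_, ?_, ?_⟩
  · intro b
    have h0 := (hlin b).map_zero
    simp only [sub_eq_zero] at h0
    exact h0
  · intro a
    constructor
    · intro x y; simp [map_add]; abel
    · intro c x; simp [map_smul, smul_sub]
  · intro b
    constructor
    · intro a1 a2
      rw [key, key, key]
      have heq : (fun b : V => mu (a1 + a2) b - b)
          = fun b : V => (mu a1 b - b) + (mu a2 b - b) := by
        funext b'
        have := (hlin b').map_add a1 a2
        simpa using this
      rw [heq, fderiv_fun_add (hdsub a1) (hdsub a2)]
      simp
    · intro c a
      rw [key, key]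
      have heq : (fun b : V => mu (c • a) b - b)
          = fun b : V => c • (mu a b - b) := by
        funext b'
        have := (hlin b').map_smul c a
        simpa using this
      rw [heq, fderiv_fun_const_smul (hdsub a)]
      simp
  · intro a
    have heq : (fun b : V => a + b + (fderiv ℝ (mu a) 0 b - b))
        = fun b : V => a + fderiv ℝ (mu a) 0 b := by
      funext b; abel
    rw [heq]
    rw [fderiv_const_add]
    exact (fderiv ℝ (mu a) 0).fderiv
end

section
/- With the notation of the context, for every m ≥ 1, every sequence I = (i_1,…,i_m) of integers, all homogeneous a_1 ∈ A_{i_1}, …, a_m ∈ A_{i_m} and all b, c ∈ A, the following identity holds: |I|·N(I)·a_1⋯a_m·(cb − bc) = ∑_P N(I_P)·a_P·B(P^c), where the sum runs over all subsets P ⊆ {1,…,m} whose complement P^c is nonempty. (This is the recursion characterizing the Shestakov–Umirbaev brackets ⟨a_1,…,a_m; b,c⟩ of the algebra (A,*), so it expresses that these brackets are given by the closed formula B.) -/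
open scoped Classical

section

variable {K : Type*} [Field K] [CharZero K] {A : Type*} [Ring A] [Algebra K A]

/-- `a_P`: the ordered product `a_{p_1} ⋯ a_{p_r}` over the subset `P = {p_1 < … < p_r}`
(the empty product being `1`). -/
noncomputable def aProd {m : ℕ} (a : Fin m → A) (P : Finset (Fin m)) : A :=
  ((P.sort (· ≤ ·)).map a).prod

/-- `|I_P| = i_{p_1} + … + i_{p_r}`. -/
def sumI {m : ℕ} (i : Fin m → ℤ) (P : Finset (Fin m)) : ℤ := ∑ j ∈ P, i j

/-- `N(I_P) = (i_{p_1}+1)(i_{p_1}+i_{p_2}+1)⋯(i_{p_1}+⋯+i_{p_r}+1)`, with `N(I_∅) = 1`. -/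
def Nfun {m : ℕ} (i : Fin m → ℤ) (P : Finset (Fin m)) : ℤ :=
  ((List.range (P.sort (· ≤ ·)).length).map
    fun r => (((P.sort (· ≤ ·)).map i).take (r + 1)).sum + 1).prod

/-- `B(Q) = ∑_{k≥1} ∑_{(P_1,…,P_k)} (−1)^{k+1} |I_{P_k}| N(I_{P_1})⋯N(I_{P_k})
a_{P_1}⋯a_{P_k} (cb − bc)`, the inner sum over ordered partitions of `Q` into `k`
nonempty pairwise disjoint subsets. -/
noncomputable def Bfun {m : ℕ} (i : Fin m → ℤ) (a : Fin m → A) (b c : A)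
    (Q : Finset (Fin m)) : A :=
  ∑ kk ∈ Finset.range m, ∑ f : Fin (kk + 1) → Finset (Fin m),
    if (∀ j, (f j).Nonempty) ∧ (∀ j₁ j₂, j₁ ≠ j₂ → Disjoint (f j₁) (f j₂)) ∧
        Finset.univ.biUnion f = Q then
      ((-1 : ℤ) ^ (kk + 2) * sumI i (f (Fin.last kk)) * ∏ j, Nfun i (f j)) •
        ((List.ofFn fun j : Fin (kk + 1) => aProd a (f j)).prod * (c * b - b * c))
    else 0

/-- the partition condition -/
abbrev pcond {m kk : ℕ} (f : Fin (kk + 1) → Finset (Fin m)) (Q : Finset (Fin m)) : Prop :=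
  (∀ j, (f j).Nonempty) ∧ (∀ j₁ j₂, j₁ ≠ j₂ → Disjoint (f j₁) (f j₂)) ∧
    Finset.univ.biUnion f = Q

noncomputable def Bterm {m : ℕ} (i : Fin m → ℤ) (a : Fin m → A) (b c : A) (kk : ℕ)
    (Q : Finset (Fin m)) : A :=
  ∑ f : Fin (kk + 1) → Finset (Fin m),
    if (∀ j, (f j).Nonempty) ∧ (∀ j₁ j₂, j₁ ≠ j₂ → Disjoint (f j₁) (f j₂)) ∧
        Finset.univ.biUnion f = Q then
      ((-1 : ℤ) ^ (kk + 2) * sumI i (f (Fin.last kk)) * ∏ j, Nfun i (f j)) •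
        ((List.ofFn fun j : Fin (kk + 1) => aProd a (f j)).prod * (c * b - b * c))
    else 0

lemma Bfun_eq {m : ℕ} (i : Fin m → ℤ) (a : Fin m → A) (b c : A) (Q : Finset (Fin m)) :
    Bfun i a b c Q = ∑ kk ∈ Finset.range m, Bterm i a b c kk Q := rfl

lemma pcond_card {m kk : ℕ} {f : Fin (kk + 1) → Finset (Fin m)} {Q : Finset (Fin m)}
    (h : pcond f Q) : kk + 1 ≤ Q.card := by
  obtain ⟨h1, h2, h3⟩ := h
  rw [← h3, Finset.card_biUnion (fun x _ y _ hxy => h2 x y hxy)]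
  calc kk + 1 = ∑ j : Fin (kk + 1), 1 := by simp
    _ ≤ ∑ j : Fin (kk + 1), (f j).card :=
        Finset.sum_le_sum fun j _ => Finset.Nonempty.card_pos (h1 j)

lemma Bterm_eq_zero {m : ℕ} (i : Fin m → ℤ) (a : Fin m → A) (b c : A) {kk : ℕ}
    {Q : Finset (Fin m)} (h : Q.card < kk + 1) : Bterm i a b c kk Q = 0 := by
  refine Finset.sum_eq_zero fun f _ => ?_
  rw [if_neg]
  exact fun hc => absurd (pcond_card hc) (not_le.mpr h)

lemma pcond_cons {m kk : ℕ} (P : Finset (Fin m)) (g : Fin (kk + 1) → Finset (Fin m)) :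
    pcond (Fin.cons P g) Finset.univ ↔ P.Nonempty ∧ pcond g Pᶜ := by
  constructor
  · rintro ⟨h1, h2, h3⟩
    refine ⟨h1 0, fun j => h1 j.succ, fun j₁ j₂ hne => ?_, ?_⟩
    · have := h2 j₁.succ j₂.succ (fun h => hne (Fin.succ_injective _ h))
      simpa using this
    · ext x
      simp only [Finset.mem_biUnion, Finset.mem_univ, true_and, Finset.mem_compl]
      constructor
      · rintro ⟨j, hj⟩ hP
        have hd := h2 0 j.succ (by simp [Fin.succ_ne_zero j, (Fin.succ_ne_zero j).symm])
        exact Finset.disjoint_left.mp hd (by simpa using hP) (by simpa using hj)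
      · intro hP
        have : x ∈ Finset.univ.biUnion (Fin.cons P g) := by rw [h3]; simp
        simp only [Finset.mem_biUnion, Finset.mem_univ, true_and] at this
        obtain ⟨j, hj⟩ := this
        refine Fin.cases (fun hj => absurd (by simpa using hj) hP)
          (fun j hj => ⟨j, by simpa using hj⟩) j hj
  · rintro ⟨hP, h1, h2, h3⟩
    have hsub : ∀ j, g j ⊆ Pᶜ := by
      intro j x hx
      rw [← h3]
      simp only [Finset.mem_biUnion, Finset.mem_univ, true_and]
      exact ⟨j, hx⟩
    have hdisj : ∀ j, Disjoint P (g j) := fun j =>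
      Finset.disjoint_left.mpr fun x hxP hxg =>
        absurd hxP (by simpa using hsub j hxg)
    refine ⟨fun j => Fin.cases hP h1 j, fun j₁ j₂ hne => ?_, ?_⟩
    · rcases Fin.eq_zero_or_eq_succ j₁ with h₁ | ⟨j₁', h₁⟩ <;>
        rcases Fin.eq_zero_or_eq_succ j₂ with h₂ | ⟨j₂', h₂⟩ <;> subst h₁ <;> subst h₂
      · exact absurd rfl hne
      · simpa using hdisj j₂'
      · simpa using (hdisj j₁').symm
      · have : j₁' ≠ j₂' := fun h => hne (by rw [h])
        simpa using h2 j₁' j₂' this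
    · ext x
      simp only [Finset.mem_biUnion, Finset.mem_univ, true_and, iff_true]
      by_cases hx : x ∈ P
      · exact ⟨0, by simpa using hx⟩
      · have : x ∈ Finset.univ.biUnion g := by rw [h3]; simpa using hx
        simp only [Finset.mem_biUnion, Finset.mem_univ, true_and] at this
        obtain ⟨j, hj⟩ := this
        exact ⟨j.succ, by simpa using hj⟩

lemma aProd_empty {m : ℕ} (a : Fin m → A) : aProd a ∅ = 1 := by
  simp [aProd]

lemma Nfun_empty {m : ℕ} (i : Fin m → ℤ) : Nfun i ∅ = 1 := by
  simp [Nfun]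

lemma Bterm_zero {m : ℕ} (hm : 1 ≤ m) (i : Fin m → ℤ) (a : Fin m → A) (b c : A) :
    Bterm i a b c 0 (Finset.univ : Finset (Fin m)) =
      (sumI i Finset.univ * Nfun i Finset.univ) •
        (aProd a Finset.univ * (c * b - b * c)) := by
  have : Nonempty (Fin m) := ⟨⟨0, hm⟩⟩
  rw [Bterm, Fintype.sum_eq_single (fun _ : Fin 1 => (Finset.univ : Finset (Fin m)))]
  · rw [if_pos]
    · simp [mul_comm]
    · refine ⟨fun _ => Finset.univ_nonempty, fun j₁ j₂ h =>
        absurd ((Fin.eq_zero j₁).trans (Fin.eq_zero j₂).symm) h, ?_⟩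
      ext x
      simp
  · intro f hf
    rw [if_neg]
    rintro ⟨h1, h2, h3⟩
    apply hf
    funext j
    have hj0 : j = 0 := Fin.eq_zero j
    subst hj0
    rw [← h3]
    ext x
    simp only [Finset.mem_biUnion, Finset.mem_univ, true_and]
    exact ⟨fun h => ⟨0, h⟩, fun ⟨j, h⟩ => by rwa [Fin.eq_zero j] at h⟩

lemma sum_cons_pair {n : ℕ} {β M : Type*} [Fintype β] [AddCommMonoid M]
    (F : (Fin (n + 1) → β) → M) :
    ∑ f : Fin (n + 1) → β, F f = ∑ p : β, ∑ g : Fin n → β, F (Fin.cons p g) := by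
  rw [← Equiv.sum_comp (Fin.consEquiv fun _ : Fin (n + 1) => β) F, Fintype.sum_prod_type]
  rfl

lemma Bterm_succ {m : ℕ} (i : Fin m → ℤ) (a : Fin m → A) (b c : A) (kk : ℕ) :
    Bterm i a b c (kk + 1) (Finset.univ : Finset (Fin m)) =
      ∑ P : Finset (Fin m),
        if P.Nonempty then -(Nfun i P • (aProd a P * Bterm i a b c kk Pᶜ)) else 0 := by
  rw [Bterm, sum_cons_pair]
  refine Finset.sum_congr rfl fun P _ => ?_
  by_cases hP : P.Nonempty
  · rw [if_pos hP, Bterm, Finset.mul_sum, Finset.smul_sum, ← Finset.sum_neg_distrib]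
    refine Finset.sum_congr rfl fun g _ => ?_
    by_cases hg : pcond g Pᶜ
    · rw [if_pos ((pcond_cons P g).mpr ⟨hP, hg⟩), if_pos hg]
      have hlast : (Fin.cons P g : Fin (kk + 1 + 1) → Finset (Fin m)) (Fin.last (kk + 1)) =
          g (Fin.last kk) := by
        rw [← Fin.succ_last, Fin.cons_succ]
      have hprod : (∏ j, Nfun i ((Fin.cons P g : Fin (kk + 1 + 1) → Finset (Fin m)) j)) =
          Nfun i P * ∏ j, Nfun i (g j) := by
        rw [Fin.prod_univ_succ]
        simp
      have hofn : (List.ofFn fun j : Fin (kk + 1 + 1) =>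
            aProd a ((Fin.cons P g : Fin (kk + 1 + 1) → Finset (Fin m)) j)) =
          aProd a P :: List.ofFn fun j : Fin (kk + 1) => aProd a (g j) := by
        rw [List.ofFn_succ]
        simp
      rw [hlast, hprod, hofn, List.prod_cons]
      rw [mul_smul_comm, smul_smul, ← neg_smul, mul_assoc (aProd a P)]
      congr 1
      ring
    · rw [if_neg (fun hc => hg ((pcond_cons P g).mp hc).2), if_neg hg]
      simp
  · rw [if_neg hP]
    exact Finset.sum_eq_zero fun g _ =>
      if_neg (fun hc => hP ((pcond_cons P g).mp hc).1)

/-- The recursion characterizing the Shestakov–Umirbaev brackets of `(A,*)`: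
`|I|·N(I)·a_1⋯a_m·(cb − bc) = ∑_P N(I_P)·a_P·B(Pᶜ)`, the sum over all subsets
`P ⊆ {1,…,m}` with nonempty complement. -/
theorem statement5 (K : Type*) [Field K] [CharZero K] (A : Type*) [Ring A] [Algebra K A]
    (𝒜 : ℤ → Submodule K A) [GradedRing 𝒜]
    (m : ℕ) (hm : 1 ≤ m) (i : Fin m → ℤ) (a : Fin m → A)
    (ha : ∀ j, a j ∈ 𝒜 (i j)) (b c : A) :
    (sumI i Finset.univ * Nfun i Finset.univ) •
        (aProd a Finset.univ * (c * b - b * c)) =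
      ∑ P ∈ Finset.univ.filter (fun P : Finset (Fin m) => P ≠ Finset.univ),
        Nfun i P • (aProd a P * Bfun i a b c Pᶜ) := by
  obtain ⟨n, rfl⟩ : ∃ n, m = n + 1 := ⟨m - 1, (Nat.succ_pred_eq_of_pos hm).symm⟩
  have hBempty : Bfun i a b c (∅ : Finset (Fin (n + 1))) = 0 := by
    rw [Bfun_eq]
    exact Finset.sum_eq_zero fun kk _ => Bterm_eq_zero i a b c (by simp)
  have hBfun_ne : ∀ P : Finset (Fin (n + 1)), P.Nonempty →
      Bfun i a b c Pᶜ = ∑ kk ∈ Finset.range n, Bterm i a b c kk Pᶜ := by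
    intro P hP
    rw [Bfun_eq, Finset.sum_range_succ, Bterm_eq_zero, add_zero]
    have h1 : 1 ≤ P.card := hP.card_pos
    have h2 := Finset.card_compl P
    simp only [Fintype.card_fin] at h2
    omega
  rw [Finset.filter_ne', Finset.sum_erase _ (by
    rw [Finset.compl_univ, hBempty, mul_zero, smul_zero])]
  rw [← Finset.add_sum_erase _ _ (Finset.mem_univ (∅ : Finset (Fin (n + 1))))]
  have ht0 : Nfun i (∅ : Finset (Fin (n + 1))) •
      (aProd a (∅ : Finset (Fin (n + 1))) * Bfun i a b c (∅ : Finset (Fin (n + 1)))ᶜ) =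
      Bfun i a b c Finset.univ := by
    rw [Nfun_empty, aProd_empty, one_smul, one_mul, Finset.compl_empty]
  rw [ht0]
  have hBuniv : Bfun i a b c (Finset.univ : Finset (Fin (n + 1))) =
      (∑ kk ∈ Finset.range n, ∑ P : Finset (Fin (n + 1)),
        if P.Nonempty then -(Nfun i P • (aProd a P * Bterm i a b c kk Pᶜ)) else 0)
      + (sumI i Finset.univ * Nfun i Finset.univ) •
          (aProd a Finset.univ * (c * b - b * c)) := by
    rw [Bfun_eq, Finset.sum_range_succ', Bterm_zero hm]
    congr 1
    exact Finset.sum_congr rfl fun kk _ => Bterm_succ i a b c kk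
  rw [hBuniv]
  have hM : (∑ kk ∈ Finset.range n, ∑ P : Finset (Fin (n + 1)),
        if P.Nonempty then -(Nfun i P • (aProd a P * Bterm i a b c kk Pᶜ)) else 0)
      = ∑ P : Finset (Fin (n + 1)),
        if P.Nonempty then -(Nfun i P • (aProd a P * Bfun i a b c Pᶜ)) else 0 := by
    rw [Finset.sum_comm]
    refine Finset.sum_congr rfl fun P _ => ?_
    by_cases hP : P.Nonempty
    · simp only [if_pos hP]
      rw [hBfun_ne P hP, Finset.mul_sum, Finset.smul_sum, ← Finset.sum_neg_distrib]
    · simp [hP]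
  have hE : (∑ P ∈ (Finset.univ : Finset (Finset (Fin (n + 1)))).erase ∅,
        Nfun i P • (aProd a P * Bfun i a b c Pᶜ)) =
      ∑ P : Finset (Fin (n + 1)),
        if P.Nonempty then Nfun i P • (aProd a P * Bfun i a b c Pᶜ) else 0 := by
    rw [← Finset.filter_ne', Finset.sum_filter]
    exact Finset.sum_congr rfl fun P _ =>
      if_congr Finset.nonempty_iff_ne_empty.symm rfl rfl
  rw [hM, hE]
  have hzero : (∑ P : Finset (Fin (n + 1)),
        if P.Nonempty then -(Nfun i P • (aProd a P * Bfun i a b c Pᶜ)) else 0)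
      + (∑ P : Finset (Fin (n + 1)),
        if P.Nonempty then Nfun i P • (aProd a P * Bfun i a b c Pᶜ) else 0) = 0 := by
    rw [← Finset.sum_add_distrib]
    refine Finset.sum_eq_zero fun P _ => ?_
    by_cases hP : P.Nonempty <;> simp [hP]
  rw [add_right_comm, hzero, zero_add]

end
end

section
/- Let H be a subloop of 𝒥(R) with [𝒥(R),H] ⊆ H. Then: (1) 𝔥_{n+1}(H) ⊆ 𝔥_{n+2}(H) for all n ≥ 1, and 𝔥_1(H) ⊆ 𝔥_3(H); (2) R·𝔥_n(H)·R ⊆ 𝔥_{n+2}(H) for all n ≥ 1, i.e. βαγ ∈ 𝔥_{n+2}(H) whenever β, γ ∈ R and α ∈ 𝔥_n(H). -/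
open PowerSeries

/-- `f ≡ g (mod 𝒥_n(R))`: the coefficients of `t^{i+1}` coincide for `1 ≤ i ≤ n − 1`. -/
def JModEq {R : Type*} [Ring R] (n : ℕ) (f g : PowerSeries R) : Prop :=
  ∀ i, 1 ≤ i → i < n → coeff (i + 1) f = coeff (i + 1) g

/-- `𝔥_n(H) = {α ∈ R ∣ ∃ h ∈ H, h ≡ t + α t^{n+1} (mod 𝒥_{n+1}(R))}`. -/
def hSet {R : Type*} [Ring R] (H : Set (PowerSeries R)) (n : ℕ) : Set R :=
  {α | ∃ h ∈ H, JModEq (n + 1) h (X + monomial (n + 1) α)}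

set_option linter.unusedSectionVars false
set_option maxHeartbeats 1000000
section Aux

section PS
variable {R : Type*} [Ring R]

lemma coeff_pow_zero {g : PowerSeries R} (h0 : coeff 0 g = 0) {k m : ℕ} (hk : k < m) :
    coeff k (g ^ m) = 0 := by
  induction m generalizing k with
  | zero => omega
  | succ m ih =>
      rw [pow_succ', coeff_mul, Finset.Nat.sum_antidiagonal_eq_sum_range_succ_mk]
      apply Finset.sum_eq_zero
      intro i hi
      simp only [Finset.mem_range] at hi
      rcases Nat.eq_zero_or_pos i with rfl | hipos
      · rw [h0, zero_mul]
      · rw [ih (by omega), mul_zero]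

lemma coeff_pow_approx {g : PowerSeries R} {n : ℕ} {a : R}
    (h0 : coeff 0 g = 0) (h1 : coeff 1 g = 1)
    (hmid : ∀ j, 2 ≤ j → j ≤ n → coeff j g = 0)
    (htop : coeff (n + 1) g = a) (hn : 1 ≤ n) :
    ∀ m k, k ≤ m + n + 1 →
      coeff k (g ^ (m + 1)) =
        (if k = m + 1 then 1 else 0) +
          (if k = m + n + 1 then ((m + 1 : ℕ) : R) * a else 0) := by
  intro m
  induction m with
  | zero =>
      intro k hk
      simp only [pow_one, zero_add, Nat.cast_one, one_mul]
      rcases (by omega : k = 0 ∨ k = 1 ∨ (2 ≤ k ∧ k ≤ n) ∨ k = n + 1) with rfl | rfl | ⟨h2, h3⟩ | rfl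
      · rw [h0, if_neg (by omega), if_neg (by omega)]; norm_num
      · rw [h1, if_pos rfl, if_neg (by omega)]; norm_num
      · rw [hmid k h2 h3, if_neg (by omega), if_neg (by omega)]; norm_num
      · rw [htop, if_neg (by omega), if_pos rfl]; norm_num
  | succ m ih =>
      intro k hk
      by_cases hsmall : k < m + 2
      · rw [coeff_pow_zero h0 hsmall, if_neg (by omega), if_neg (by omega)]; norm_num
      · push_neg at hsmall
        rw [pow_succ', coeff_mul, Finset.Nat.sum_antidiagonal_eq_sum_range_succ_mk]
        have hterm : ∀ i ∈ Finset.range (k + 1),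
            coeff i g * coeff (k - i) (g ^ (m + 1)) =
              (if i = 1 then coeff (k - 1) (g ^ (m + 1)) else 0) +
                (if i = n + 1 then a * coeff (k - (n + 1)) (g ^ (m + 1)) else 0) := by
          intro i hi
          simp only [Finset.mem_range] at hi
          rcases (by omega : i = 0 ∨ i = 1 ∨ (2 ≤ i ∧ i ≤ n) ∨ i = n + 1 ∨ n + 2 ≤ i) with
            rfl | rfl | ⟨h2, h3⟩ | rfl | h5
          · rw [h0, if_neg (by omega), if_neg (by omega)]; noncomm_ring
          · rw [h1, if_pos rfl, if_neg (by omega)]; noncomm_ring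
          · rw [hmid i h2 h3, if_neg (by omega), if_neg (by omega)]; noncomm_ring
          · rw [htop, if_neg (by omega), if_pos rfl]; rw [zero_add]
          · rw [coeff_pow_zero h0 (by omega : k - i < m + 1), if_neg (by omega),
              if_neg (by omega)]; noncomm_ring
        rw [Finset.sum_congr rfl hterm, Finset.sum_add_distrib,
          Finset.sum_ite_eq', Finset.sum_ite_eq',
          if_pos (Finset.mem_range.2 (by omega : 1 < k + 1)),
          ih (k - 1) (by omega)]
        by_cases hkn : n + 1 < k + 1
        · rw [if_pos (Finset.mem_range.2 hkn), ih (k - (n + 1)) (by omega)]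
          split_ifs <;> first | omega | (push_cast; noncomm_ring; done) | (push_cast; abel; done) | norm_num
        · rw [if_neg (fun hmem => hkn (Finset.mem_range.1 hmem))]
          split_ifs <;> first | omega | (push_cast; noncomm_ring; done) | (push_cast; abel; done) | norm_num

lemma coeff_pow_congr {A B : PowerSeries R} (hA : coeff 0 A = 0) (hB : coeff 0 B = 0)
    {k : ℕ} (h : ∀ j, j < k → coeff j A = coeff j B) :
    ∀ m, ∀ j ≤ k, coeff j (A ^ (m + 2)) = coeff j (B ^ (m + 2)) := by
  intro m
  induction m with
  | zero =>
      intro j hj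
      rw [show (0 + 2 : ℕ) = 2 by rfl, pow_two, pow_two, coeff_mul, coeff_mul]
      apply Finset.sum_congr rfl
      intro p hp
      simp only [Finset.HasAntidiagonal.mem_antidiagonal] at hp
      obtain ⟨i1, i2⟩ := p
      rcases Nat.eq_zero_or_pos i1 with rfl | h1
      · simp only at hp ⊢; rw [hA, hB, zero_mul, zero_mul]
      · rcases Nat.eq_zero_or_pos i2 with rfl | h2
        · simp only at hp ⊢; rw [hA, hB, mul_zero, mul_zero]
        · simp only at hp ⊢
          rw [h i1 (by omega), h i2 (by omega)]
  | succ m ih =>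
      intro j hj
      rw [show m + 1 + 2 = (m + 2) + 1 by omega, pow_succ' A (m+2), pow_succ' B (m+2), coeff_mul, coeff_mul]
      apply Finset.sum_congr rfl
      intro p hp
      simp only [Finset.HasAntidiagonal.mem_antidiagonal] at hp
      obtain ⟨i1, i2⟩ := p
      rcases Nat.eq_zero_or_pos i1 with rfl | h1
      · simp only at hp ⊢; rw [hA, hB, zero_mul, zero_mul]
      · rcases Nat.eq_zero_or_pos i2 with rfl | h2
        · simp only at hp ⊢
          rw [coeff_pow_zero hA (by omega), coeff_pow_zero hB (by omega),
            mul_zero, mul_zero]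
        · simp only at hp ⊢
          rw [h i1 (by omega), ih i2 (by omega)]

noncomputable def divCoeff (u v : PowerSeries R) : ℕ → R
  | 0 => 0
  | 1 => 1
  | (k + 2) =>
      coeff (k + 2) v -
        ∑ m ∈ Finset.range (k + 1),
          coeff (m + 2) u *
            coeff (k + 2)
              ((PowerSeries.mk fun i => if h : i < k + 2 then divCoeff u v i else 0) ^ (m + 2))
  termination_by k => k
  decreasing_by exact h

lemma exists_div (u v : PowerSeries R) (hu : u ∈ Jset R) (hv : v ∈ Jset R) :
    ∃ w ∈ Jset R, Jcomp u w = v := by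
  classical
  refine ⟨PowerSeries.mk (divCoeff u v), ⟨?_, ?_⟩, ?_⟩
  · rw [coeff_mk]; simp [divCoeff]
  · rw [coeff_mk]; simp [divCoeff]
  · ext k
    rw [coeff_Jcomp]
    match k with
    | 0 => simpa using hv.1.symm
    | 1 =>
        rw [Finset.sum_range_one, pow_one, hu.2, coeff_mk]
        simp only [divCoeff, one_mul]
        exact hv.2.symm
    | (k + 2) =>
        have hw0 : coeff 0 (PowerSeries.mk (divCoeff u v)) = 0 := by
          rw [coeff_mk]; simp [divCoeff]
        have htr : ∀ m : ℕ,
            coeff (k + 2)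
                ((PowerSeries.mk fun i => if h : i < k + 2 then divCoeff u v i else 0) ^ (m + 2)) =
              coeff (k + 2) ((PowerSeries.mk (divCoeff u v)) ^ (m + 2)) := by
          intro m
          refine coeff_pow_congr ?_ hw0 ?_ m (k + 2) le_rfl
          · rw [coeff_mk]; simp [divCoeff]
          · intro j hj
            rw [coeff_mk, coeff_mk, dif_pos hj]
        rw [Finset.sum_range_succ']
        rw [pow_one, hu.2, one_mul, coeff_mk]
        have hdc : divCoeff u v (k + 2) =
            coeff (k + 2) v -
              ∑ m ∈ Finset.range (k + 1),
                coeff (m + 2) u *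
                  coeff (k + 2)
                    ((PowerSeries.mk fun i => if h : i < k + 2 then divCoeff u v i else 0) ^ (m + 2)) := by
          conv_lhs => rw [divCoeff]
        rw [hdc]
        have : ∀ m ∈ Finset.range (k + 1),
            coeff (m + 1 + 1) u *
                coeff (k + 2) ((PowerSeries.mk (divCoeff u v)) ^ (m + 1 + 1)) =
              coeff (m + 2) u *
                coeff (k + 2)
                  ((PowerSeries.mk fun i => if h : i < k + 2 then divCoeff u v i else 0) ^ (m + 2)) := by
          intro m _
          rw [show m + 1 + 1 = m + 2 by omega, htr m]
        rw [Finset.sum_congr rfl this]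
        abel

lemma Jcomp_mem_Jset {f g : PowerSeries R} (hf : f ∈ Jset R) (hg : g ∈ Jset R) :
    Jcomp f g ∈ Jset R := by
  constructor
  · rw [coeff_Jcomp]; simp
  · rw [coeff_Jcomp, Finset.sum_range_one, pow_one, hf.2, hg.2, one_mul]

lemma coeff_eq_of_comp {u v w : PowerSeries R}
    (hu1 : coeff 1 u = 1) (hw0 : coeff 0 w = 0) (hw1 : coeff 1 w = 1)
    (hc : Jcomp u w = v) {N : ℕ} (hN : 1 ≤ N)
    (hagree : ∀ j, 2 ≤ j → j ≤ N → coeff j u = coeff j v) :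
    ∀ j, 2 ≤ j → j ≤ N + 1 → coeff j w = coeff j v - coeff j u := by
  intro j
  induction j using Nat.strong_induction_on with
  | _ j IH =>
    intro hj2 hjN
    have hmid : ∀ i, 2 ≤ i → i ≤ j - 1 → coeff i w = 0 := by
      intro i h2 h3
      rw [IH i (by omega) h2 (by omega), ← hagree i h2 (by omega), sub_self]
    have htopw : coeff ((j - 1) + 1) w = coeff j w := by
      rw [show j - 1 + 1 = j by omega]
    have hpow := coeff_pow_approx hw0 hw1 (fun i h2 h3 => hmid i h2 h3) htopw
      (by omega : 1 ≤ j - 1)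
    have hvj : coeff j v = coeff j (Jcomp u w) := by rw [hc]
    rw [coeff_Jcomp] at hvj
    have hterm : ∀ mm ∈ Finset.range j,
        coeff (mm + 1) u * coeff j (w ^ (mm + 1)) =
          (if mm = 0 then coeff j w else 0) + (if mm = j - 1 then coeff j u else 0) := by
      intro mm hmm
      simp only [Finset.mem_range] at hmm
      rw [hpow mm j (by omega)]
      by_cases h0 : mm = 0
      · subst h0
        rw [if_neg (show ¬ j = 0 + 1 by omega), if_pos (show j = 0 + (j - 1) + 1 by omega),
          if_pos rfl, if_neg (show ¬ (0 : ℕ) = j - 1 by omega)]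
        simp only [zero_add, Nat.cast_one, one_mul, add_zero]
        rw [hu1, one_mul]
      · by_cases hlast : mm = j - 1
        · rw [if_pos (by omega : j = mm + 1), if_neg (by omega : ¬ j = mm + (j - 1) + 1),
            if_neg h0, if_pos hlast]
          rw [show mm + 1 = j by omega]
          noncomm_ring
        · rw [if_neg (by omega : ¬ j = mm + 1), if_neg (by omega : ¬ j = mm + (j - 1) + 1),
            if_neg h0, if_neg hlast]
          noncomm_ring
    rw [Finset.sum_congr rfl hterm, Finset.sum_add_distrib, Finset.sum_ite_eq',
      Finset.sum_ite_eq', if_pos (Finset.mem_range.2 (by omega : 0 < j)),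
      if_pos (Finset.mem_range.2 (by omega : j - 1 < j))] at hvj
    rw [hvj]
    abel

lemma coeff_two (m : ℕ) (β : R) (k : ℕ) :
    coeff k (X + monomial (m + 1) β) =
      (if k = 1 then 1 else 0) + (if k = m + 1 then β else 0) := by
  rw [map_add, coeff_X, coeff_monomial]

lemma twoTerm_mem_Jset {m : ℕ} (hm : 1 ≤ m) (β : R) :
    (X + monomial (m + 1) β) ∈ Jset R := by
  constructor
  · rw [coeff_two, if_neg (by omega), if_neg (by omega)]; norm_num
  · rw [coeff_two, if_pos rfl, if_neg (by omega)]; norm_num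

lemma coeff_comp_right {h : PowerSeries R} {n : ℕ} {a : R}
    (h0 : coeff 0 h = 0) (h1 : coeff 1 h = 1)
    (hmid : ∀ j, 2 ≤ j → j ≤ n → coeff j h = 0)
    (htop : coeff (n + 1) h = a) (hn : 1 ≤ n) {m : ℕ} (hm : 1 ≤ m) (β : R) :
    ∀ k ≤ m + n + 1,
      coeff k (Jcomp (X + monomial (m + 1) β) h) =
        coeff k h + (if k = m + 1 then β else 0) +
          (if k = m + n + 1 then β * (((m + 1 : ℕ) : R) * a) else 0) := by
  intro k hk
  rw [coeff_Jcomp]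
  have hterm : ∀ j ∈ Finset.range k,
      coeff (j + 1) (X + monomial (m + 1) β) * coeff k (h ^ (j + 1)) =
        (if j = 0 then coeff k h else 0) +
          (if j = m then β * coeff k (h ^ (m + 1)) else 0) := by
    intro j _
    rw [coeff_two]
    by_cases e0 : j = 0
    · subst e0
      rw [if_pos rfl, if_neg (by omega), if_pos rfl, if_neg (by omega)]
      simp [pow_one]
    · by_cases em : j = m
      · subst em
        rw [if_neg (by omega), if_pos rfl, if_neg e0, if_pos rfl]
        noncomm_ring
      · rw [if_neg (by omega), if_neg (by omega), if_neg e0, if_neg em]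
        noncomm_ring
  rw [Finset.sum_congr rfl hterm, Finset.sum_add_distrib, Finset.sum_ite_eq',
    Finset.sum_ite_eq']
  by_cases hk0 : k = 0
  · subst hk0
    rw [if_neg (by simp), if_neg (by simp), h0, if_neg (by omega), if_neg (by omega)]
    norm_num
  · rw [if_pos (Finset.mem_range.2 (by omega))]
    by_cases hkm : m < k
    · rw [if_pos (Finset.mem_range.2 hkm),
        coeff_pow_approx h0 h1 hmid htop hn m k hk]
      split_ifs <;> first | omega | (push_cast; noncomm_ring; done) | noncomm_ring
    · rw [if_neg (fun hmem => hkm (Finset.mem_range.1 hmem)),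
        if_neg (by omega), if_neg (by omega), add_zero, add_zero]

lemma coeff_comp_left {h : PowerSeries R} {n : ℕ} {a : R}
    (h0 : coeff 0 h = 0) (h1 : coeff 1 h = 1)
    (hmid : ∀ j, 2 ≤ j → j ≤ n → coeff j h = 0)
    (htop : coeff (n + 1) h = a) (hn : 1 ≤ n) {m : ℕ} (hm : 1 ≤ m) (β : R) :
    ∀ k ≤ m + n + 1,
      coeff k (Jcomp h (X + monomial (m + 1) β)) =
        coeff k h + (if k = m + 1 then β else 0) +
          (if k = m + n + 1 then a * (((n + 1 : ℕ) : R) * β) else 0) := by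
  have hf0 : coeff 0 (X + monomial (m + 1) β) = 0 := by
    rw [coeff_two, if_neg (by omega), if_neg (by omega)]; norm_num
  have hf1 : coeff 1 (X + monomial (m + 1) β) = 1 := by
    rw [coeff_two, if_pos rfl, if_neg (by omega)]; norm_num
  have hfmid : ∀ j, 2 ≤ j → j ≤ m → coeff j (X + monomial (m + 1) β) = 0 := by
    intro j hj2 hjm
    rw [coeff_two, if_neg (by omega), if_neg (by omega)]; norm_num
  have hftop : coeff (m + 1) (X + monomial (m + 1) β) = β := by
    rw [coeff_two, if_neg (by omega), if_pos rfl]; norm_num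
  have hfpow := coeff_pow_approx hf0 hf1 hfmid hftop hm
  intro k hk
  rw [coeff_Jcomp]
  by_cases hk0 : k = 0
  · subst hk0
    rw [Finset.sum_range_zero, h0, if_neg (by omega), if_neg (by omega)]
    norm_num
  · by_cases hk1 : k = 1
    · subst hk1
      rw [Finset.sum_range_one, pow_one, h1, one_mul, hf1,
        if_neg (by omega : ¬ (1:ℕ) = m + 1), if_neg (by omega : ¬ (1:ℕ) = m + n + 1)]
      norm_num
    · -- k ≥ 2
      have hterm : ∀ j ∈ Finset.range k,
          coeff (j + 1) h * coeff k ((X + monomial (m + 1) β) ^ (j + 1)) =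
            (if j = 0 then coeff k (X + monomial (m + 1) β) else 0) +
              ((if j = k - 1 then coeff k h else 0) +
                (if j = k - (m + 1) then
                    (if k = m + n + 1 then a * (((n + 1 : ℕ) : R) * β) else 0) else 0)) := by
        intro j hj
        simp only [Finset.mem_range] at hj
        rcases (by omega : j = 0 ∨ (1 ≤ j ∧ j + 1 ≤ n) ∨ n ≤ j) with rfl | ⟨hj1, hj2⟩ | hjn
        · rw [if_pos rfl, if_neg (by omega : ¬ (0 : ℕ) = k - 1)]
          have h3 : (if (0 : ℕ) = k - (m + 1) then
              (if k = m + n + 1 then a * (((n + 1 : ℕ) : R) * β) else 0) else 0) = 0 := by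
            by_cases hc : (0 : ℕ) = k - (m + 1)
            · rw [if_pos hc, if_neg (by omega)]
            · rw [if_neg hc]
          rw [h3]
          simp only [zero_add, pow_one, h1, one_mul, add_zero]
        · rw [hmid (j + 1) (by omega) (by omega), zero_mul, if_neg (by omega)]
          have h2 : (if j = k - 1 then coeff k h else 0) = 0 := by
            by_cases hc : j = k - 1
            · rw [if_pos hc, hmid k (by omega) (by omega)]
            · rw [if_neg hc]
          have h3 : (if j = k - (m + 1) then
              (if k = m + n + 1 then a * (((n + 1 : ℕ) : R) * β) else 0) else 0) = 0 := by
            by_cases hc : j = k - (m + 1)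
            · rw [if_pos hc, if_neg (by omega)]
            · rw [if_neg hc]
          rw [h2, h3]
          norm_num
        · rw [hfpow j k (by omega)]
          by_cases hc1 : k = j + 1
          · rw [if_pos hc1, if_neg (by omega : ¬ k = j + m + 1), if_neg (by omega : ¬ j = 0),
              if_pos (by omega : j = k - 1)]
            have h3 : (if j = k - (m + 1) then
                (if k = m + n + 1 then a * (((n + 1 : ℕ) : R) * β) else 0) else 0) = 0 := by
              by_cases hc : j = k - (m + 1)
              · rw [if_pos hc, if_neg (by omega)]
              · rw [if_neg hc]
            rw [h3, hc1]
            noncomm_ring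
          · by_cases hc2 : k = j + m + 1
            · have hjn2 : j = n := by omega
              rw [if_neg hc1, if_pos hc2, show j + 1 = n + 1 by omega, htop,
                if_neg (by omega : ¬ j = 0),
                if_neg (by omega : ¬ j = k - 1), if_pos (by omega : j = k - (m + 1)),
                if_pos (by omega : k = m + n + 1)]
              noncomm_ring
            · rw [if_neg hc1, if_neg hc2, if_neg (by omega : ¬ j = 0),
                if_neg (by omega : ¬ j = k - 1)]
              have h3 : (if j = k - (m + 1) then
                  (if k = m + n + 1 then a * (((n + 1 : ℕ) : R) * β) else 0) else 0) = 0 := by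
                by_cases hc : j = k - (m + 1)
                · rw [if_pos hc, if_neg (by omega)]
                · rw [if_neg hc]
              rw [h3]
              noncomm_ring
      rw [Finset.sum_congr rfl hterm, Finset.sum_add_distrib, Finset.sum_add_distrib,
        Finset.sum_ite_eq', Finset.sum_ite_eq', Finset.sum_ite_eq',
        if_pos (Finset.mem_range.2 (by omega : 0 < k)),
        if_pos (Finset.mem_range.2 (by omega : k - 1 < k)),
        if_pos (Finset.mem_range.2 (by omega : k - (m + 1) < k)),
        coeff_two, if_neg (by omega : ¬ k = 1)]
      abel

end PS

section withH
variable {R : Type*} [Ring R] {H : Set (PowerSeries R)}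

lemma hSet_elim (hHJ : H ⊆ Jset R) {N : ℕ} (hN : 1 ≤ N) {α : R} (hα : α ∈ hSet H N) :
    ∃ h ∈ H, coeff 0 h = 0 ∧ coeff 1 h = 1 ∧
      (∀ j, 2 ≤ j → j ≤ N → coeff j h = 0) ∧ coeff (N + 1) h = α := by
  obtain ⟨h, hH, hmod⟩ := hα
  have hJ := hHJ hH
  refine ⟨h, hH, hJ.1, hJ.2, ?_, ?_⟩
  · intro j h2 h3
    have hh := hmod (j - 1) (by omega) (by omega)
    rw [show j - 1 + 1 = j by omega] at hh
    rw [hh, coeff_two, if_neg (by omega), if_neg (by omega)]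
    norm_num
  · have hh := hmod N (by omega) (by omega)
    rw [hh, coeff_two, if_neg (by omega), if_pos rfl]
    norm_num

lemma hSet_intro {N : ℕ} (hN : 1 ≤ N) {w : PowerSeries R} (hwH : w ∈ H)
    (hmid : ∀ j, 2 ≤ j → j ≤ N → coeff j w = 0) :
    coeff (N + 1) w ∈ hSet H N := by
  refine ⟨w, hwH, ?_⟩
  intro i hi1 hi2
  rw [coeff_two]
  by_cases hiN : i = N
  · subst hiN
    rw [if_neg (by omega), if_pos rfl, zero_add]
  · rw [if_neg (by omega), if_neg (by omega), hmid (i + 1) (by omega) (by omega)]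
    norm_num

lemma key_mem (hHJ : H ⊆ Jset R)
    (hnorm : ∀ f ∈ Jset R, ∀ h ∈ H, ∀ w ∈ Jset R, Jcomp (Jcomp h f) w = Jcomp f h → w ∈ H)
    {n m : ℕ} (hn : 1 ≤ n) (hm : 1 ≤ m) {α : R} (hα : α ∈ hSet H n) (β : R) :
    β * (((m + 1 : ℕ) : R) * α) - α * (((n + 1 : ℕ) : R) * β) ∈ hSet H (m + n) := by
  obtain ⟨h, hH, h0, h1, hmid, htop⟩ := hSet_elim hHJ hn hα
  have hhJ : h ∈ Jset R := ⟨h0, h1⟩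
  have hfJ := twoTerm_mem_Jset hm β
  have huJ : Jcomp h (X + monomial (m + 1) β) ∈ Jset R := Jcomp_mem_Jset hhJ hfJ
  have hvJ : Jcomp (X + monomial (m + 1) β) h ∈ Jset R := Jcomp_mem_Jset hfJ hhJ
  obtain ⟨w, hwJ, hw⟩ := exists_div _ _ huJ hvJ
  have hwH : w ∈ H := hnorm _ hfJ h hH w hwJ hw
  have hL := coeff_comp_left h0 h1 hmid htop hn hm β
  have hR := coeff_comp_right h0 h1 hmid htop hn hm β
  have hagree : ∀ j, 2 ≤ j → j ≤ m + n →
      coeff j (Jcomp h (X + monomial (m + 1) β)) =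
        coeff j (Jcomp (X + monomial (m + 1) β) h) := by
    intro j h2 h3
    rw [hL j (by omega), hR j (by omega), if_neg (by omega : ¬ j = m + n + 1),
      if_neg (by omega : ¬ j = m + n + 1)]
  have hco := coeff_eq_of_comp huJ.2 hwJ.1 hwJ.2 hw (by omega : 1 ≤ m + n) hagree
  have hmidw : ∀ j, 2 ≤ j → j ≤ m + n → coeff j w = 0 := by
    intro j h2 h3
    rw [hco j h2 (by omega), ← hagree j h2 h3, sub_self]
  have htopw : coeff (m + n + 1) w =
      β * (((m + 1 : ℕ) : R) * α) - α * (((n + 1 : ℕ) : R) * β) := by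
    rw [hco (m + n + 1) (by omega) (by omega), hR (m + n + 1) le_rfl, hL (m + n + 1) le_rfl,
      if_neg (by omega : ¬ m + n + 1 = m + 1), if_pos rfl, if_pos rfl]
    abel
  have hfin := hSet_intro (by omega : 1 ≤ m + n) hwH hmidw
  rwa [htopw] at hfin

lemma hSet_add (hHJ : H ⊆ Jset R) (hHmul : ∀ f ∈ H, ∀ g ∈ H, Jcomp f g ∈ H)
    {N : ℕ} (hN : 1 ≤ N) {a b : R} (ha : a ∈ hSet H N) (hb : b ∈ hSet H N) :
    a + b ∈ hSet H N := by
  obtain ⟨h₁, hH₁, h₁0, h₁1, h₁mid, h₁top⟩ := hSet_elim hHJ hN ha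
  obtain ⟨h₂, hH₂, h₂0, h₂1, h₂mid, h₂top⟩ := hSet_elim hHJ hN hb
  have hpow := coeff_pow_approx h₂0 h₂1 h₂mid h₂top hN
  have hterm : ∀ k, k ≤ N + 1 → ∀ j ∈ Finset.range k,
      coeff (j + 1) h₁ * coeff k (h₂ ^ (j + 1)) =
        (if j = k - 1 then coeff k h₁ else 0) +
          (if j = 0 then (if k = N + 1 then b else 0) else 0) := by
    intro k hk j hj
    simp only [Finset.mem_range] at hj
    rw [hpow j k (by omega)]
    by_cases hc1 : k = j + 1
    · rw [if_pos hc1, if_pos (by omega : j = k - 1)]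
      by_cases hc2 : k = j + N + 1
      · omega
      · rw [if_neg hc2, ← hc1]
        have hj0 : (if j = 0 then (if k = N + 1 then b else 0) else 0) = 0 := by
          by_cases hcc : j = 0
          · rw [if_pos hcc, if_neg (by omega)]
          · rw [if_neg hcc]
        rw [hj0]
        noncomm_ring
    · by_cases hc2 : k = j + N + 1
      · have hj0 : j = 0 := by omega
        subst hj0
        rw [if_neg (by omega : ¬ k = 0 + 1), if_pos hc2,
          if_neg (by omega : ¬ (0:ℕ) = k - 1), if_pos rfl, if_pos (by omega : k = N + 1)]
        simp only [zero_add, Nat.cast_one, h₁1, one_mul]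
      · rw [if_neg hc1, if_neg hc2, if_neg (by omega : ¬ j = k - 1)]
        have hj0 : (if j = 0 then (if k = N + 1 then b else 0) else 0) = 0 := by
          by_cases hcc : j = 0
          · rw [if_pos hcc, if_neg (by omega)]
          · rw [if_neg hcc]
        rw [hj0]
        noncomm_ring
  have hcomp : ∀ k, 1 ≤ k → k ≤ N + 1 →
      coeff k (Jcomp h₁ h₂) = coeff k h₁ + (if k = N + 1 then b else 0) := by
    intro k hk1 hk
    rw [coeff_Jcomp, Finset.sum_congr rfl (hterm k hk), Finset.sum_add_distrib,
      Finset.sum_ite_eq', Finset.sum_ite_eq',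
      if_pos (Finset.mem_range.2 (by omega : k - 1 < k)),
      if_pos (Finset.mem_range.2 (by omega : 0 < k))]
  have hmemH := hHmul h₁ hH₁ h₂ hH₂
  have hmidc : ∀ j, 2 ≤ j → j ≤ N → coeff j (Jcomp h₁ h₂) = 0 := by
    intro j h2 h3
    rw [hcomp j (by omega) (by omega), if_neg (by omega), h₁mid j h2 h3, add_zero]
  have hfin := hSet_intro hN hmemH hmidc
  rw [hcomp (N + 1) (by omega) le_rfl, if_pos rfl, h₁top] at hfin
  exact hfin

lemma hSet_neg (hHJ : H ⊆ Jset R) (hHt : (X : PowerSeries R) ∈ H)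
    (hHld : ∀ f ∈ H, ∀ g ∈ H, ∀ w ∈ Jset R, Jcomp f w = g → w ∈ H)
    {N : ℕ} (hN : 1 ≤ N) {a : R} (ha : a ∈ hSet H N) : -a ∈ hSet H N := by
  obtain ⟨h, hH, h0, h1, hmid, htop⟩ := hSet_elim hHJ hN ha
  have hhJ : h ∈ Jset R := ⟨h0, h1⟩
  have hXJ : (X : PowerSeries R) ∈ Jset R := by
    constructor
    · rw [coeff_X]; norm_num
    · rw [coeff_X]; norm_num
  obtain ⟨w, hwJ, hw⟩ := exists_div h X hhJ hXJ
  have hwH : w ∈ H := hHld h hH X hHt w hwJ hw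
  have hagree : ∀ j, 2 ≤ j → j ≤ N → coeff j h = coeff j (X : PowerSeries R) := by
    intro j h2 h3
    rw [hmid j h2 h3, coeff_X, if_neg (by omega)]
  have hco := coeff_eq_of_comp h1 hwJ.1 hwJ.2 hw hN hagree
  have hmidw : ∀ j, 2 ≤ j → j ≤ N → coeff j w = 0 := by
    intro j h2 h3
    rw [hco j h2 (by omega), ← hagree j h2 h3, sub_self]
  have htopw : coeff (N + 1) w = -a := by
    rw [hco (N + 1) (by omega) le_rfl, coeff_X, if_neg (by omega), htop, zero_sub]
  have hfin := hSet_intro hN hwH hmidw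
  rwa [htopw] at hfin

lemma hSet_sub (hHJ : H ⊆ Jset R) (hHt : (X : PowerSeries R) ∈ H)
    (hHmul : ∀ f ∈ H, ∀ g ∈ H, Jcomp f g ∈ H)
    (hHld : ∀ f ∈ H, ∀ g ∈ H, ∀ w ∈ Jset R, Jcomp f w = g → w ∈ H)
    {N : ℕ} (hN : 1 ≤ N) {a b : R} (ha : a ∈ hSet H N) (hb : b ∈ hSet H N) :
    a - b ∈ hSet H N := by
  have := hSet_add hHJ hHmul hN ha (hSet_neg hHJ hHt hHld hN hb)
  rwa [← sub_eq_add_neg] at this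

end withH

section withK
variable {K : Type*} [Field K] [CharZero K] {R : Type*} [Ring R] [Algebra K R]
  {H : Set (PowerSeries R)}

lemma algmul_left (c : K) (x : R) : algebraMap K R c * x = c • x := (Algebra.smul_def c x).symm

lemma algmul_right (c : K) (x : R) : x * algebraMap K R c = c • x := by
  rw [← Algebra.commutes c x]; exact (Algebra.smul_def c x).symm

lemma key_smul (hHJ : H ⊆ Jset R)
    (hnorm : ∀ f ∈ Jset R, ∀ h ∈ H, ∀ w ∈ Jset R, Jcomp (Jcomp h f) w = Jcomp f h → w ∈ H)
    {n m : ℕ} (hn : 1 ≤ n) (hm : 1 ≤ m) {α : R} (hα : α ∈ hSet H n) (β : R) :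
    (((m : ℕ) : K) + 1) • (β * α) - (((n : ℕ) : K) + 1) • (α * β) ∈ hSet H (m + n) := by
  have hk := key_mem hHJ hnorm hn hm hα β
  have e1 : ∀ (q : ℕ) (x : R), ((q + 1 : ℕ) : R) * x = (((q : ℕ) : K) + 1) • x := by
    intro q x
    rw [Algebra.smul_def, map_add, map_natCast, map_one]
    push_cast
    rfl
  have e : β * (((m + 1 : ℕ) : R) * α) - α * (((n + 1 : ℕ) : R) * β)
      = (((m : ℕ) : K) + 1) • (β * α) - (((n : ℕ) : K) + 1) • (α * β) := by
    rw [e1 m α, e1 n β, mul_smul_comm, mul_smul_comm]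
  rwa [e] at hk

end withK

lemma part1 {K : Type*} [Field K] [CharZero K] {R : Type*} [Ring R] [Algebra K R]
    {H : Set (PowerSeries R)} (hHJ : H ⊆ Jset R)
    (hnorm : ∀ f ∈ Jset R, ∀ h ∈ H, ∀ w ∈ Jset R, Jcomp (Jcomp h f) w = Jcomp f h → w ∈ H) :
    ∀ n : ℕ, 1 ≤ n → hSet H (n + 1) ⊆ hSet H (n + 2) := by
  intro n hn α hα
  have hne : (n : K) ≠ 0 := Nat.cast_ne_zero.mpr (by omega)
  have hk := key_smul (K := K) hHJ hnorm (show 1 ≤ n + 1 by omega) le_rfl hα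
    (algebraMap K R (-(n : K)⁻¹))
  rw [show 1 + (n + 1) = n + 2 by omega] at hk
  have e : (((1 : ℕ) : K) + 1) • (algebraMap K R (-(n : K)⁻¹) * α) -
      (((n + 1 : ℕ) : K) + 1) • (α * algebraMap K R (-(n : K)⁻¹)) = α := by
    rw [algmul_left, algmul_right, smul_smul, smul_smul, ← sub_smul]
    have hs : (((1 : ℕ) : K) + 1) * (-(n : K)⁻¹) - ((((n + 1 : ℕ)) : K) + 1) * (-(n : K)⁻¹)
        = 1 := by
      push_cast
      field_simp
      ring
    rw [hs, one_smul]
  rwa [e] at hk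

lemma part2 {R : Type*} [Ring R] {H : Set (PowerSeries R)} (hHJ : H ⊆ Jset R)
    (hnorm : ∀ f ∈ Jset R, ∀ h ∈ H, ∀ w ∈ Jset R, Jcomp (Jcomp h f) w = Jcomp f h → w ∈ H) :
    hSet H 1 ⊆ hSet H 3 := by
  intro α hα
  have hk := key_mem hHJ hnorm le_rfl (by omega : 1 ≤ 2) hα (1 : R)
  have e : (1 : R) * (((2 + 1 : ℕ) : R) * α) - α * (((1 + 1 : ℕ) : R) * (1 : R)) = α := by
    push_cast
    noncomm_ring
  rw [e] at hk
  exact hk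

lemma part3 {K : Type*} [Field K] [CharZero K] {R : Type*} [Ring R] [Algebra K R]
    {H : Set (PowerSeries R)} (hHJ : H ⊆ Jset R) (hHt : (X : PowerSeries R) ∈ H)
    (hHmul : ∀ f ∈ H, ∀ g ∈ H, Jcomp f g ∈ H)
    (hHld : ∀ f ∈ H, ∀ g ∈ H, ∀ w ∈ Jset R, Jcomp f w = g → w ∈ H)
    (hnorm : ∀ f ∈ Jset R, ∀ h ∈ H, ∀ w ∈ Jset R, Jcomp (Jcomp h f) w = Jcomp f h → w ∈ H) :
    ∀ n : ℕ, 1 ≤ n → ∀ α ∈ hSet H n, ∀ β γ : R, β * α * γ ∈ hSet H (n + 2) := by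
  intro n hn α hα β γ
  have hsub : hSet H (n + 1) ⊆ hSet H (n + 2) := part1 (K := K) hHJ hnorm n hn
  have hA1 : ∀ δ : R,
      (((1 : ℕ) : K) + 1) • (δ * α) - (((n : ℕ) : K) + 1) • (α * δ) ∈ hSet H (n + 1) := by
    intro δ
    have h := key_smul (K := K) hHJ hnorm hn le_rfl hα δ
    rwa [show 1 + n = n + 1 by omega] at h
  have hA2 : ∀ δ : R,
      (((1 : ℕ) : K) + 1) • (δ * α) - (((n : ℕ) : K) + 1) • (α * δ) ∈ hSet H (n + 2) :=
    fun δ => hsub (hA1 δ)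
  have hC : ∀ δ : R,
      (((2 : ℕ) : K) + 1) • (δ * α) - (((n : ℕ) : K) + 1) • (α * δ) ∈ hSet H (n + 2) := by
    intro δ
    have h := key_smul (K := K) hHJ hnorm hn (by omega : 1 ≤ 2) hα δ
    rwa [show 2 + n = n + 2 by omega] at h
  have hP0 : ∀ δ : R, δ * α ∈ hSet H (n + 2) := by
    intro δ
    have h := hSet_sub hHJ hHt hHmul hHld (by omega : 1 ≤ n + 2) (hC δ) (hA2 δ)
    have e : ((((2 : ℕ) : K) + 1) • (δ * α) - (((n : ℕ) : K) + 1) • (α * δ)) -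
        ((((1 : ℕ) : K) + 1) • (δ * α) - (((n : ℕ) : K) + 1) • (α * δ)) = δ * α := by
      push_cast
      module
    rwa [e] at h
  have hne : (((n : ℕ) : K) + 1) ≠ 0 := by
    have h1 : (((n : ℕ) : K) + 1) = ((n + 1 : ℕ) : K) := by push_cast; ring
    rw [h1]
    exact Nat.cast_ne_zero.mpr (by omega)
  have hP1 : ∀ δ : R, α * δ ∈ hSet H (n + 2) := by
    intro δ
    have h1 := hC (((((n : ℕ) : K) + 1)⁻¹) • δ)
    have h2 := hP0 (((3 : K) * ((((n : ℕ) : K) + 1)⁻¹)) • δ)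
    have h := hSet_sub hHJ hHt hHmul hHld (by omega : 1 ≤ n + 2) h2 h1
    have e : (((3 : K) * ((((n : ℕ) : K) + 1)⁻¹)) • δ) * α -
        ((((2 : ℕ) : K) + 1) • ((((((n : ℕ) : K) + 1)⁻¹) • δ) * α) -
          (((n : ℕ) : K) + 1) • (α * ((((((n : ℕ) : K) + 1)⁻¹) • δ)))) = α * δ := by
      simp only [smul_mul_assoc, mul_smul_comm, smul_smul]
      push_cast
      match_scalars <;> (field_simp; try ring)
    rwa [e] at h
  have hB : ∀ δ : R, ∀ x ∈ hSet H (n + 1),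
      (((1 : ℕ) : K) + 1) • (δ * x) - (((n + 1 : ℕ) : K) + 1) • (x * δ) ∈ hSet H (n + 2) := by
    intro δ x hx
    have h := key_smul (K := K) hHJ hnorm (by omega : 1 ≤ n + 1) le_rfl hx δ
    rwa [show 1 + (n + 1) = n + 2 by omega] at h
  have hS : ∀ b c : R,
      (2 * (((n : ℕ) : K) + 1)) • (c * (α * b)) + (2 * (((n : ℕ) : K) + 2)) • (b * (α * c)) ∈
        hSet H (n + 2) := by
    intro b c
    have hE := hB c _ (hA1 b)
    have hu := hP0 ((4 : K) • (c * b))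
    have hv := hP1 ((((((n : ℕ) : K) + 1) * (((n : ℕ) : K) + 2))) • (b * c))
    have h := hSet_sub hHJ hHt hHmul hHld (by omega : 1 ≤ n + 2)
      (hSet_add hHJ hHmul (by omega : 1 ≤ n + 2) hu hv) hE
    have e : ((((4 : K) • (c * b)) * α +
          α * ((((((n : ℕ) : K) + 1) * (((n : ℕ) : K) + 2))) • (b * c))) -
        ((((1 : ℕ) : K) + 1) •
            (c * ((((1 : ℕ) : K) + 1) • (b * α) - (((n : ℕ) : K) + 1) • (α * b))) -
          (((n + 1 : ℕ) : K) + 1) •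
            (((((1 : ℕ) : K) + 1) • (b * α) - (((n : ℕ) : K) + 1) • (α * b)) * c))) =
        (2 * (((n : ℕ) : K) + 1)) • (c * (α * b)) + (2 * (((n : ℕ) : K) + 2)) • (b * (α * c)) := by
      simp only [smul_mul_assoc, mul_smul_comm, smul_smul, smul_sub, mul_sub, sub_mul, mul_assoc]
      push_cast
      module
    rwa [e] at h
  have hd : (2 * ((n : ℕ) : K) + 3) ≠ 0 := by
    have h1 : (2 * ((n : ℕ) : K) + 3) = ((2 * n + 3 : ℕ) : K) := by push_cast; ring
    rw [h1]
    exact Nat.cast_ne_zero.mpr (by omega)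
  have h1 := hS ((((((n : ℕ) : K) + 2) / (2 * (2 * ((n : ℕ) : K) + 3)))) • β) γ
  have h2 := hS γ ((-((((n : ℕ) : K) + 1) / (2 * (2 * ((n : ℕ) : K) + 3)))) • β)
  have h := hSet_add hHJ hHmul (by omega : 1 ≤ n + 2) h1 h2
  have e : ((2 * (((n : ℕ) : K) + 1)) •
        (γ * (α * ((((((n : ℕ) : K) + 2) / (2 * (2 * ((n : ℕ) : K) + 3)))) • β))) +
      (2 * (((n : ℕ) : K) + 2)) •
        (((((((n : ℕ) : K) + 2) / (2 * (2 * ((n : ℕ) : K) + 3)))) • β) * (α * γ))) +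
      ((2 * (((n : ℕ) : K) + 1)) •
        (((-((((n : ℕ) : K) + 1) / (2 * (2 * ((n : ℕ) : K) + 3)))) • β) * (α * γ)) +
      (2 * (((n : ℕ) : K) + 2)) •
        (γ * (α * ((-((((n : ℕ) : K) + 1) / (2 * (2 * ((n : ℕ) : K) + 3)))) • β)))) =
      β * α * γ := by
    simp only [smul_mul_assoc, mul_smul_comm, smul_smul, mul_assoc]
    match_scalars <;> (field_simp; try ring)
  rwa [e] at h


end Aux

/-- If `H` is a subloop of `𝒥(R)` with `[𝒥(R),H] ⊆ H`, then
`𝔥_{n+1}(H) ⊆ 𝔥_{n+2}(H)` for `n ≥ 1`, `𝔥_1(H) ⊆ 𝔥_3(H)`, and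
`R·𝔥_n(H)·R ⊆ 𝔥_{n+2}(H)`. -/
theorem statement9 (K : Type*) [Field K] [CharZero K]
    (R : Type*) [Ring R] [Algebra K R] (H : Set (PowerSeries R))
    (hHJ : H ⊆ Jset R) (hHt : (X : PowerSeries R) ∈ H)
    (hHmul : ∀ f ∈ H, ∀ g ∈ H, Jcomp f g ∈ H)
    (hHld : ∀ f ∈ H, ∀ g ∈ H, ∀ w ∈ Jset R, Jcomp f w = g → w ∈ H)
    (hHrd : ∀ f ∈ H, ∀ g ∈ H, ∀ w ∈ Jset R, Jcomp w g = f → w ∈ H)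
    (hnorm : ∀ f ∈ Jset R, ∀ h ∈ H, ∀ w ∈ Jset R,
      Jcomp (Jcomp h f) w = Jcomp f h → w ∈ H) :
    (∀ n : ℕ, 1 ≤ n → hSet H (n + 1) ⊆ hSet H (n + 2)) ∧
    hSet H 1 ⊆ hSet H 3 ∧
    (∀ n : ℕ, 1 ≤ n → ∀ α ∈ hSet H n, ∀ β γ : R, β * α * γ ∈ hSet H (n + 2)) := by
  exact ⟨part1 (K := K) hHJ hnorm, part2 hHJ hnorm, part3 (K := K) hHJ hHt hHmul hHld hnorm⟩
end

section
/- If S[S,S] = 0, then ⟨a,b⟩ := b′a − a′b is a Lie bracket on S[t]: it is bilinear, ⟨a,b⟩ = −⟨b,a⟩, and the Jacobi identity ⟨⟨a,b⟩,c⟩ + ⟨⟨b,c⟩,a⟩ + ⟨⟨c,a⟩,b⟩ = 0 holds for all a, b, c ∈ S[t]. -/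
noncomputable section

variable (K : Type*) [Field K] [CharZero K]
variable (S : Type*) [NonUnitalRing S] [Module K S] [SMulCommClass K S S] [IsScalarTower K S S]

/-- The polynomial algebra `S[t]` over the (possibly nonunital, noncommutative)
`K`-algebra `S`, realized as the non-unital subalgebra of `(Unitization K S)[t]`
consisting of polynomials all of whose coefficients lie in `S`. -/
def polyS : NonUnitalSubalgebra K (Polynomial (Unitization K S)) where
  carrier := {p | ∀ n, (p.coeff n).fst = 0}
  add_mem' := by intro a b ha hb n; simp [ha n, hb n]
  zero_mem' := by intro n; simp
  mul_mem' := by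
    intro a b ha hb n
    rw [Set.mem_setOf_eq] at *
    rw [Polynomial.coeff_mul]
    have : ∀ (s : Finset (ℕ × ℕ)) (f : ℕ × ℕ → Unitization K S),
        (∑ x ∈ s, f x).fst = ∑ x ∈ s, (f x).fst := by
      intro s f
      induction s using Finset.cons_induction with
      | empty => simp
      | cons a t hat ih => rw [Finset.sum_cons, Finset.sum_cons, Unitization.fst_add, ih]
    rw [this]
    exact Finset.sum_eq_zero fun p _ => by rw [Unitization.fst_mul, ha p.1, zero_mul]
  smul_mem' := by intro c x hx n; simp [hx n]

variable {K S}

/-- The element `s·tⁿ` of `S[t]`. -/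
def polyS.single (n : ℕ) (s : S) : polyS K S :=
  ⟨Polynomial.monomial n (Unitization.inr s), by
    intro k
    simp only [Polynomial.coeff_monomial]
    split <;> simp⟩

/-- The formal derivative `d/dt` on `S[t]`. -/
def polyS.deriv (p : polyS K S) : polyS K S :=
  ⟨Polynomial.derivative (p : Polynomial (Unitization K S)), by
    intro n
    have h : ∀ k, ((p : Polynomial (Unitization K S)).coeff k).fst = 0 := p.2
    rw [Polynomial.coeff_derivative, Unitization.fst_mul, h (n + 1), zero_mul]⟩

/-- The bracket `⟨a,b⟩ := b′a − a′b` on `S[t]`. -/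
def polyS.bracket (a b : polyS K S) : polyS K S :=
  polyS.deriv b * a - polyS.deriv a * b


lemma aux_unitization {K : Type*} [Field K] [CharZero K]
    {S : Type*} [NonUnitalRing S] [Module K S] [SMulCommClass K S S] [IsScalarTower K S S]
    (hS : ∀ s u v : S, s * (u * v - v * u) = 0)
    (x u v : Unitization K S) (hx : x.fst = 0) :
    x * (u * v) = x * (v * u) := by
  have h := hS x.snd u.snd v.snd
  rw [mul_sub, sub_eq_zero] at h
  apply Unitization.ext
  · simp [hx]
  · simp only [Unitization.snd_mul, Unitization.fst_mul, hx, zero_smul, zero_add,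
      mul_add, mul_smul_comm, h]
    module

lemma aux_poly {K : Type*} [Field K] [CharZero K]
    {S : Type*} [NonUnitalRing S] [Module K S] [SMulCommClass K S S] [IsScalarTower K S S]
    (hS : ∀ s u v : S, s * (u * v - v * u) = 0)
    (p q r : Polynomial (Unitization K S)) (hp : ∀ n, (p.coeff n).fst = 0) :
    p * (q * r) = p * (r * q) := by
  induction q using Polynomial.induction_on' with
  | add f g hf hg => simp only [add_mul, mul_add, hf, hg]
  | monomial j u =>
    induction r using Polynomial.induction_on' with
    | add f g hf hg => simp only [mul_add, add_mul, hf, hg]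
    | monomial k v =>
      rw [Polynomial.monomial_mul_monomial, Polynomial.monomial_mul_monomial, add_comm k j]
      rw [← Polynomial.C_mul_X_pow_eq_monomial, ← Polynomial.C_mul_X_pow_eq_monomial,
        ← mul_assoc, ← mul_assoc]
      congr 1
      apply Polynomial.ext
      intro n
      rw [Polynomial.coeff_mul_C, Polynomial.coeff_mul_C]
      exact aux_unitization hS _ u v (hp n)

lemma aux_comm_zero {K : Type*} [Field K] [CharZero K]
    {S : Type*} [NonUnitalRing S] [Module K S] [SMulCommClass K S S] [IsScalarTower K S S]
    (hS : ∀ s u v : S, s * (u * v - v * u) = 0)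
    (p q r : Polynomial (Unitization K S)) (hp : ∀ n, (p.coeff n).fst = 0) :
    p * (q * r - r * q) = 0 := by
  rw [mul_sub, aux_poly hS p q r hp, sub_self]

lemma aux_deriv_mem {K : Type*} [Field K] [CharZero K]
    {S : Type*} [NonUnitalRing S] [Module K S] [SMulCommClass K S S] [IsScalarTower K S S]
    (p : Polynomial (Unitization K S)) (hp : ∀ n, (p.coeff n).fst = 0) :
    ∀ n, ((Polynomial.derivative p).coeff n).fst = 0 := by
  intro n
  rw [Polynomial.coeff_derivative, Unitization.fst_mul, hp (n + 1), zero_mul]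

/-- If `S[S,S] = 0`, then `⟨a,b⟩ := b′a − a′b` is a Lie bracket on `S[t]`:
it is `K`-bilinear, antisymmetric, and satisfies the Jacobi identity. -/
theorem statement14 {K : Type*} [Field K] [CharZero K]
    {S : Type*} [NonUnitalRing S] [Module K S] [SMulCommClass K S S] [IsScalarTower K S S]
    (hS : ∀ s u v : S, s * (u * v - v * u) = 0) :
    (∀ (k : K) (a a' b : polyS K S),
      polyS.bracket (k • a + a') b = k • polyS.bracket a b + polyS.bracket a' b) ∧
    (∀ (k : K) (a b b' : polyS K S),
      polyS.bracket a (k • b + b') = k • polyS.bracket a b + polyS.bracket a b') ∧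
    (∀ a b : polyS K S, polyS.bracket a b = - polyS.bracket b a) ∧
    (∀ a b c : polyS K S,
      polyS.bracket (polyS.bracket a b) c + polyS.bracket (polyS.bracket b c) a
          + polyS.bracket (polyS.bracket c a) b = 0) := by
  have coe_bracket : ∀ a b : polyS K S,
      ((polyS.bracket a b : polyS K S) : Polynomial (Unitization K S)) =
        Polynomial.derivative (b : Polynomial (Unitization K S)) * a -
          Polynomial.derivative (a : Polynomial (Unitization K S)) * b := fun a b => rfl
  refine ⟨?_, ?_, ?_, ?_⟩
  · intro k a a' b
    apply Subtype.ext
    simp only [coe_bracket, NonUnitalSubalgebra.coe_add, SetLike.val_smul, map_add,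
      Polynomial.derivative_smul]
    simp only [mul_add, add_mul, smul_sub, smul_mul_assoc, mul_smul_comm]
    abel
  · intro k a b b'
    apply Subtype.ext
    simp only [coe_bracket, NonUnitalSubalgebra.coe_add, SetLike.val_smul, map_add,
      Polynomial.derivative_smul]
    simp only [mul_add, add_mul, smul_sub, smul_mul_assoc, mul_smul_comm]
    abel
  · intro a b
    apply Subtype.ext
    simp only [coe_bracket, NonUnitalSubalgebra.coe_neg]
    abel
  · intro a b c
    apply Subtype.ext
    simp only [coe_bracket, NonUnitalSubalgebra.coe_add, NonUnitalSubalgebra.coe_zero,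
      map_sub, Polynomial.derivative_mul]
    set A := (a : Polynomial (Unitization K S)) with hA
    set B := (b : Polynomial (Unitization K S)) with hB
    set C := (c : Polynomial (Unitization K S)) with hC
    set D := fun p : Polynomial (Unitization K S) => Polynomial.derivative p with hD
    have key : (D C * (D B * A - D A * B) -
          (D (D B) * A + D B * D A - (D (D A) * B + D A * D B)) * C) +
        (D A * (D C * B - D B * C) -
          (D (D C) * B + D C * D B - (D (D B) * C + D B * D C)) * A) +
        (D B * (D A * C - D C * A) -
          (D (D A) * C + D A * D C - (D (D C) * A + D C * D A)) * B) =
        D (D A) * (B * C - C * B) + D (D B) * (C * A - A * C) +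
          D (D C) * (A * B - B * A) := by
      simp only [mul_sub, sub_mul, mul_add, add_mul, mul_assoc]
      abel
    rw [key, aux_comm_zero hS _ _ _ (aux_deriv_mem _ (aux_deriv_mem _ a.2)),
      aux_comm_zero hS _ _ _ (aux_deriv_mem _ (aux_deriv_mem _ b.2)),
      aux_comm_zero hS _ _ _ (aux_deriv_mem _ (aux_deriv_mem _ c.2))]
    simp

end
end

section
/- The Lie algebra (S[t], ⟨a,b⟩ := b′a − a′b) is not Wronskian special: there exist no commutative K-algebra Φ, K-linear derivation d : Φ → Φ, and injective K-linear map φ : S[t] → Φ such that φ(b′a − a′b) = d(φ(b))·φ(a) − d(φ(a))·φ(b) for all a, b ∈ S[t]. -/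
/-- The two–dimensional nonunital associative `K`-algebra with basis `{e,v}`,
`e·e = e`, `e·v = 0`, `v·e = v`, `v·v = 0`, realized on `K × K` via
`(α,β)·(γ,δ) = (αγ, βγ)`, with `e = (1,0)`, `v = (0,1)`. -/
def SAlg (K : Type*) := K × K

namespace SAlg

variable {K : Type*} [Field K]

instance : AddCommGroup (SAlg K) := inferInstanceAs (AddCommGroup (K × K))
instance : Module K (SAlg K) := inferInstanceAs (Module K (K × K))

instance : Mul (SAlg K) :=
  ⟨fun x y => (((x : K × K).1 * (y : K × K).1, (x : K × K).2 * (y : K × K).1) : K × K)⟩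

lemma mul_fst (x y : SAlg K) : (x * y).1 = (x : K × K).1 * (y : K × K).1 := rfl
lemma mul_snd (x y : SAlg K) : (x * y).2 = (x : K × K).2 * (y : K × K).1 := rfl
lemma add_fst (x y : SAlg K) : (x + y).1 = (x : K × K).1 + (y : K × K).1 := rfl
lemma add_snd (x y : SAlg K) : (x + y).2 = (x : K × K).2 + (y : K × K).2 := rfl
lemma zero_fst : ((0 : SAlg K) : K × K).1 = 0 := rfl
lemma zero_snd : ((0 : SAlg K) : K × K).2 = 0 := rfl
lemma smul_fst (k : K) (x : SAlg K) : ((k • x : SAlg K) : K × K).1 = k • (x : K × K).1 := rfl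
lemma smul_snd (k : K) (x : SAlg K) : ((k • x : SAlg K) : K × K).2 = k • (x : K × K).2 := rfl

instance : NonUnitalRing (SAlg K) :=
  { (inferInstance : AddCommGroup (SAlg K)) with
    mul := (· * ·)
    left_distrib := fun a b c => by
      apply Prod.ext <;> simp [mul_fst, mul_snd, add_fst, add_snd, mul_add]
    right_distrib := fun a b c => by
      apply Prod.ext <;> simp [mul_fst, mul_snd, add_fst, add_snd, add_mul]
    zero_mul := fun a => by
      apply Prod.ext <;> simp [mul_fst, mul_snd, zero_fst, zero_snd]
    mul_zero := fun a => by
      apply Prod.ext <;> simp [mul_fst, mul_snd, zero_fst, zero_snd]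
    mul_assoc := fun a b c => by
      apply Prod.ext <;> simp [mul_fst, mul_snd, mul_assoc] }

instance : SMulCommClass K (SAlg K) (SAlg K) :=
  ⟨fun k x y => by apply Prod.ext <;> simp [mul_fst, mul_snd, smul_fst, smul_snd, smul_eq_mul] <;> ring⟩

instance : IsScalarTower K (SAlg K) (SAlg K) :=
  ⟨fun k x y => by apply Prod.ext <;> simp [mul_fst, mul_snd, smul_fst, smul_snd, mul_assoc]⟩

/-- The basis element `e`. -/
def e : SAlg K := ((1, 0) : K × K)

/-- The basis element `v`. -/
def v : SAlg K := ((0, 1) : K × K)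

end SAlg

noncomputable section

variable (K : Type*) [Field K] [CharZero K]
variable (S : Type*) [NonUnitalRing S] [Module K S] [SMulCommClass K S S] [IsScalarTower K S S]

variable {K S}

open Polynomial Unitization

set_option linter.unusedSectionVars false

lemma polyS.coe_single (n : ℕ) (s : S) :
    ((polyS.single n s : polyS K S) : Polynomial (Unitization K S)) = monomial n (inr s) := rfl

lemma polyS.coe_deriv (p : polyS K S) :
    ((polyS.deriv p : polyS K S) : Polynomial (Unitization K S))
      = derivative (p : Polynomial (Unitization K S)) := rfl

lemma polyS.single_smul (k : K) (n : ℕ) (s : S) :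
    (polyS.single n (k • s) : polyS K S) = k • polyS.single n s := by
  apply Subtype.ext
  rw [SetLike.val_smul, polyS.coe_single, polyS.coe_single, Unitization.inr_smul,
    Polynomial.smul_monomial]

lemma polyS.bracket_single (m n : ℕ) (x y : S) :
    polyS.bracket (polyS.single m x) (polyS.single n y)
      = (polyS.single (m + n - 1) ((n : K) • (y * x) - (m : K) • (x * y)) : polyS K S) := by
  apply Subtype.ext
  have key : ∀ (j : ℕ) (z : S), (derivative (monomial j (inr z : Unitization K S)))
      = monomial (j - 1) (inr ((j : K) • z)) := by
    intro j z
    rw [Polynomial.derivative_monomial]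
    congr 1
    have : ((j : ℕ) : Unitization K S) = inl ((j : ℕ) : K) := by
      rw [← map_natCast (algebraMap K (Unitization K S)) j, Unitization.algebraMap_eq_inl]
    rw [this, Unitization.inr_mul_inl]
  show ((polyS.deriv (polyS.single n y) * polyS.single m x
      - polyS.deriv (polyS.single m x) * polyS.single n y : polyS K S)
        : Polynomial (Unitization K S)) = _
  rw [AddSubgroupClass.coe_sub, MulMemClass.coe_mul, MulMemClass.coe_mul, polyS.coe_deriv,
    polyS.coe_deriv, polyS.coe_single, polyS.coe_single, polyS.coe_single, key, key,
    Polynomial.monomial_mul_monomial, Polynomial.monomial_mul_monomial,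
    ← Unitization.inr_mul, ← Unitization.inr_mul]
  simp only [smul_mul_assoc]
  rcases m with _ | m <;> rcases n with _ | n <;>
    simp [Unitization.inr_sub, map_sub, Nat.succ_sub_one, add_comm, add_left_comm]

section SAlgbrackets

variable {K : Type*} [Field K]

lemma SAlg.e_mul_e : (SAlg.e : SAlg K) * SAlg.e = SAlg.e := by
  apply Prod.ext <;> simp only [SAlg.mul_fst, SAlg.mul_snd] <;> simp [SAlg.e]

lemma SAlg.e_mul_v : (SAlg.e : SAlg K) * SAlg.v = 0 := by
  apply Prod.ext <;> simp only [SAlg.mul_fst, SAlg.mul_snd, SAlg.zero_fst, SAlg.zero_snd] <;>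
    simp [SAlg.e, SAlg.v]

lemma SAlg.v_mul_e : (SAlg.v : SAlg K) * SAlg.e = SAlg.v := by
  apply Prod.ext <;> simp only [SAlg.mul_fst, SAlg.mul_snd] <;> simp [SAlg.e, SAlg.v]

lemma SAlg.v_ne_zero : (SAlg.v : SAlg K) ≠ 0 := by
  intro h
  have h2 := congrArg (fun x : SAlg K => (x : K × K).2) h
  simp only [SAlg.v, SAlg.zero_snd] at h2
  exact one_ne_zero h2

end SAlgbrackets

section SAlgbrackets2

variable {K : Type*} [Field K] [CharZero K]

lemma bracket_ee (m n : ℕ) :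
    polyS.bracket (polyS.single m SAlg.e : polyS K (SAlg K)) (polyS.single n SAlg.e)
      = ((n : K) - (m : K)) • (polyS.single (m + n - 1) SAlg.e : polyS K (SAlg K)) := by
  rw [polyS.bracket_single, SAlg.e_mul_e, ← sub_smul, polyS.single_smul]

lemma bracket_ev (m n : ℕ) :
    polyS.bracket (polyS.single m SAlg.e : polyS K (SAlg K)) (polyS.single n SAlg.v)
      = (n : K) • (polyS.single (m + n - 1) SAlg.v : polyS K (SAlg K)) := by
  rw [polyS.bracket_single, SAlg.e_mul_v, SAlg.v_mul_e, smul_zero, sub_zero, polyS.single_smul]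

lemma bracket_ve (m n : ℕ) :
    polyS.bracket (polyS.single m SAlg.v : polyS K (SAlg K)) (polyS.single n SAlg.e)
      = (-(m : K)) • (polyS.single (m + n - 1) SAlg.v : polyS K (SAlg K)) := by
  rw [polyS.bracket_single, SAlg.e_mul_v, SAlg.v_mul_e, smul_zero, zero_sub, ← neg_smul,
    polyS.single_smul]

lemma single_v_ne_zero (n : ℕ) : (polyS.single n SAlg.v : polyS K (SAlg K)) ≠ 0 := by
  intro h
  have h2 := congrArg
    (fun p : polyS K (SAlg K) => ((p : Polynomial (Unitization K (SAlg K))).coeff n)) h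
  simp only [polyS.coe_single, Polynomial.coeff_monomial, if_pos rfl, if_true, ZeroMemClass.coe_zero,
    Polynomial.coeff_zero] at h2
  have h3 := congrArg (fun x : Unitization K (SAlg K) => x.snd) h2
  simp only [Unitization.snd_inr, Unitization.snd_zero] at h3
  exact SAlg.v_ne_zero h3

end SAlgbrackets2

set_option maxHeartbeats 2000000 in
/-- The Lie algebra `(S[t], ⟨a,b⟩ = b′a − a′b)`, for `S` the algebra spanned by `e, v`
with `ee = e, ev = 0, ve = v, vv = 0`, is not Wronskian special: there are no
commutative `K`-algebra `Φ`, `K`-linear derivation `d : Φ → Φ` and injective `K`-linear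
map `φ : S[t] → Φ` with `φ(b′a − a′b) = d(φ b)·φ a − d(φ a)·φ b` for all `a, b`. -/
theorem statement15 (K : Type*) [Field K] [CharZero K] :
    ∀ (Φ : Type*) [CommRing Φ] [Algebra K Φ] (d : Φ →ₗ[K] Φ),
      (∀ x y : Φ, d (x * y) = d x * y + x * d y) →
      ∀ φ : polyS K (SAlg K) →ₗ[K] Φ, Function.Injective φ →
        ¬ (∀ a b : polyS K (SAlg K),
            φ (polyS.bracket a b) = d (φ b) * φ a - d (φ a) * φ b) := by
  intro Φ _ _ d hd φ hinj h
  -- cyclic identity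
  have cyc : ∀ a b c : polyS K (SAlg K),
      φ (polyS.bracket a b) * φ c + φ (polyS.bracket b c) * φ a
        + φ (polyS.bracket c a) * φ b = 0 := by
    intro a b c; rw [h, h, h]; ring
  -- scalar helpers
  have cancK : ∀ (c : K) (x : Φ), c ≠ 0 → algebraMap K Φ c * x = 0 → x = 0 := by
    intro c x hc hx
    have h2 : algebraMap K Φ c⁻¹ * (algebraMap K Φ c * x) = x := by
      rw [← mul_assoc, ← map_mul, inv_mul_cancel₀ hc, map_one, one_mul]
    rw [hx, mul_zero] at h2; exact h2.symm
  have canc2 : ∀ x : Φ, (2 : Φ) * x = 0 → x = 0 := fun x hx =>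
    cancK 2 x (by norm_num) (by rwa [map_ofNat])
  have canc3 : ∀ x : Φ, (3 : Φ) * x = 0 → x = 0 := fun x hx =>
    cancK 3 x (by norm_num) (by rwa [map_ofNat])
  have canc4 : ∀ x : Φ, (4 : Φ) * x = 0 → x = 0 := fun x hx =>
    cancK 4 x (by norm_num) (by rwa [map_ofNat])
  have sm2 : ∀ x : Φ, (2 : K) • x = 2 * x := fun x => by rw [Algebra.smul_def, map_ofNat]
  have sm3 : ∀ x : Φ, (3 : K) • x = 3 * x := fun x => by rw [Algebra.smul_def, map_ofNat]
  have hdtwo : ∀ x : Φ, d (2 * x) = 2 * d x := fun x => by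
    rw [two_mul, map_add, ← two_mul]
  -- star instances
  have star : ∀ m n k : ℕ,
      ((n : K) - (m : K)) • (φ (polyS.single (m + n - 1) SAlg.e) * φ (polyS.single k SAlg.v))
        + (k : K) • (φ (polyS.single (n + k - 1) SAlg.v) * φ (polyS.single m SAlg.e))
        + -((k : K) • (φ (polyS.single (k + m - 1) SAlg.v) * φ (polyS.single n SAlg.e))) = 0 := by
    intro m n k
    have hc := cyc (polyS.single m SAlg.e) (polyS.single n SAlg.e) (polyS.single k SAlg.v)
    rw [bracket_ee m n, bracket_ev n k, bracket_ve k m] at hc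
    simp only [map_smul, smul_mul_assoc, neg_smul, neg_mul] at hc
    exact hc
  have s020 := star 0 2 0
  have s030 := star 0 3 0
  have s040 := star 0 4 0
  have s011 := star 0 1 1
  have s021 := star 0 2 1
  have s012 := star 0 1 2
  have s121 := star 1 2 1
  have s013 := star 0 1 3
  have s031 := star 0 3 1
  norm_num [sm2, sm3, one_smul] at s020 s030 s040 s011 s021 s012 s121 s013 s031
  -- products vanish
  have p10 : φ (polyS.single 1 SAlg.e) * φ (polyS.single 0 SAlg.v) = 0 := canc2 _ s020
  have p20 : φ (polyS.single 2 SAlg.e) * φ (polyS.single 0 SAlg.v) = 0 := canc3 _ s030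
  have p30 : φ (polyS.single 3 SAlg.e) * φ (polyS.single 0 SAlg.v) = 0 := s040
  have p01 : φ (polyS.single 0 SAlg.e) * φ (polyS.single 1 SAlg.v) = 0 :=
    canc2 _ (by linear_combination s011 + p10)
  have p02 : φ (polyS.single 0 SAlg.e) * φ (polyS.single 2 SAlg.v) = 0 :=
    canc4 _ (by linear_combination s021 + s012 + p20)
  have p11 : φ (polyS.single 1 SAlg.e) * φ (polyS.single 1 SAlg.v) = 0 :=
    canc2 _ (by linear_combination s021 - p02 + p20)
  have p12 : φ (polyS.single 1 SAlg.e) * φ (polyS.single 2 SAlg.v) = 0 := by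
    linear_combination s121
  have p03 : φ (polyS.single 0 SAlg.e) * φ (polyS.single 3 SAlg.v) = 0 :=
    canc4 _ (by linear_combination s013 + 3 * p12)
  have p21 : φ (polyS.single 2 SAlg.e) * φ (polyS.single 1 SAlg.v) = 0 :=
    canc3 _ (by linear_combination s031 - p03 + p30)
  -- derivative of vanishing products
  have r01 := hd (φ (polyS.single 0 SAlg.e)) (φ (polyS.single 1 SAlg.v))
  rw [p01, map_zero] at r01
  have r11 := hd (φ (polyS.single 1 SAlg.e)) (φ (polyS.single 1 SAlg.v))
  rw [p11, map_zero] at r11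
  have r21 := hd (φ (polyS.single 2 SAlg.e)) (φ (polyS.single 1 SAlg.v))
  rw [p21, map_zero] at r21
  have r02 := hd (φ (polyS.single 0 SAlg.e)) (φ (polyS.single 2 SAlg.v))
  rw [p02, map_zero] at r02
  have r20 := hd (φ (polyS.single 2 SAlg.e)) (φ (polyS.single 0 SAlg.v))
  rw [p20, map_zero] at r20
  -- direct bracket equations
  have q0 := h (polyS.single 0 SAlg.e) (polyS.single 1 SAlg.v)
  have q1 := h (polyS.single 1 SAlg.e) (polyS.single 1 SAlg.v)
  have q2 := h (polyS.single 2 SAlg.e) (polyS.single 1 SAlg.v)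
  have q3 := h (polyS.single 0 SAlg.e) (polyS.single 2 SAlg.v)
  have q4 := h (polyS.single 2 SAlg.e) (polyS.single 0 SAlg.v)
  have q5 := h (polyS.single 0 SAlg.e) (polyS.single 2 SAlg.e)
  rw [bracket_ev 0 1] at q0
  rw [bracket_ev 1 1] at q1
  rw [bracket_ev 2 1] at q2
  rw [bracket_ev 0 2] at q3
  rw [bracket_ev 2 0] at q4
  rw [bracket_ee 0 2] at q5
  norm_num [map_smul, sm2, one_smul] at q0 q1 q2 q3 q4 q5
  -- the chain
  have t1 : φ (polyS.single 1 SAlg.v)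
      = 2 * (φ (polyS.single 1 SAlg.e) * d (φ (polyS.single 1 SAlg.v))) := by
    linear_combination q1 + r11
  have t2 : φ (polyS.single 2 SAlg.v)
      = 2 * (φ (polyS.single 2 SAlg.e) * d (φ (polyS.single 1 SAlg.v))) := by
    linear_combination q2 + r21
  have t0 : φ (polyS.single 0 SAlg.v)
      = 2 * (φ (polyS.single 0 SAlg.e) * d (φ (polyS.single 1 SAlg.v))) := by
    linear_combination q0 + r01
  have t3 : 2 * φ (polyS.single 1 SAlg.v)
      = 2 * (φ (polyS.single 0 SAlg.e) * d (φ (polyS.single 2 SAlg.v))) := by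
    linear_combination q3 + r02
  have t4 : (0 : Φ) = 2 * (φ (polyS.single 2 SAlg.e) * d (φ (polyS.single 0 SAlg.v))) := by
    linear_combination q4 + r20
  have hdv2 : d (φ (polyS.single 2 SAlg.v))
      = 2 * (d (φ (polyS.single 2 SAlg.e)) * d (φ (polyS.single 1 SAlg.v)))
        + 2 * (φ (polyS.single 2 SAlg.e) * d (d (φ (polyS.single 1 SAlg.v)))) := by
    rw [t2, hdtwo, hd]; ring
  have hdv0 : d (φ (polyS.single 0 SAlg.v))
      = 2 * (d (φ (polyS.single 0 SAlg.e)) * d (φ (polyS.single 1 SAlg.v)))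
        + 2 * (φ (polyS.single 0 SAlg.e) * d (d (φ (polyS.single 1 SAlg.v)))) := by
    rw [t0, hdtwo, hd]; ring
  have final : 2 * φ (polyS.single 1 SAlg.v) = 0 := by
    linear_combination (-1 : Φ) * t3 - 2 * φ (polyS.single 0 SAlg.e) * hdv2
      + 4 * d (φ (polyS.single 1 SAlg.v)) * q5 + t4
      + 2 * φ (polyS.single 2 SAlg.e) * hdv0 + 4 * t1
  have v1zero : φ (polyS.single 1 SAlg.v) = (0 : Φ) := canc2 _ final
  have : (polyS.single 1 SAlg.v : polyS K (SAlg K)) = 0 := by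
    apply hinj
    rw [v1zero, map_zero]
  exact single_v_ne_zero 1 this

end
end
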